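/- arXiv:1412.1995 — 5 statements merged into one kernel-verified Lean document; each statement's English description precedes it below -/
import Mathlib

section
/- For all n ∈ ℕ and all k ≥ 1, Q(S_n) ≤ s_k(n)^2 + Σ_{l=k, l odd}^{n} Q(S_{n-l})/l^2. -/
open Equiv

/-- κ_E(Sₙ): the conditional probability that two independent uniform elements of Sₙ
have the same cycle type, given that both are even (by convention 1 for n ≤ 1). -/
noncomputable def kappaE (n : ℕ) : ℝ :=
  if n ≤ 1 then 1 else
    (Nat.card {p : Perm (Fin n) × Perm (Fin n) //
        Perm.sign p.1 = 1 ∧ Perm.sign p.2 = 1 ∧ p.1.cycleType = p.2.cycleType} : ℝ) /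
      (Nat.card {σ : Perm (Fin n) // Perm.sign σ = 1} : ℝ) ^ 2

/-- κ_O(Sₙ): the conditional probability that two independent uniform elements of Sₙ
have the same cycle type, given that both are odd (by convention 1 for n ≤ 1). -/
noncomputable def kappaO (n : ℕ) : ℝ :=
  if n ≤ 1 then 1 else
    (Nat.card {p : Perm (Fin n) × Perm (Fin n) //
        Perm.sign p.1 = -1 ∧ Perm.sign p.2 = -1 ∧ p.1.cycleType = p.2.cycleType} : ℝ) /
      (Nat.card {σ : Perm (Fin n) // Perm.sign σ = -1} : ℝ) ^ 2

/-- s_k(n): the probability that a uniformly random permutation of n points has all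
cycles of length strictly less than k. -/
noncomputable def s (k n : ℕ) : ℝ :=
  (Nat.card {σ : Perm (Fin n) // ∀ i ∈ σ.cycleType, i < k} : ℝ) / (Nat.factorial n : ℝ)

/-- Q(Sₙ): the probability that two independent uniform elements of Sₙ have the same
cycle type, consisting of cycles of pairwise distinct odd lengths (including the
fixed points as cycles of length 1). -/
noncomputable def Q (n : ℕ) : ℝ :=
  (Nat.card {p : Perm (Fin n) × Perm (Fin n) //
      p.1.cycleType = p.2.cycleType ∧ p.1.cycleType.Nodup ∧
      (∀ i ∈ p.1.cycleType, Odd i) ∧ n - p.1.cycleType.sum ≤ 1} : ℝ) /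
    (Nat.factorial n : ℝ) ^ 2

/-- κ(Sₙ): the probability that two independent uniform elements of Sₙ are conjugate. -/
noncomputable def kappa (n : ℕ) : ℝ :=
  (Nat.card {p : Perm (Fin n) × Perm (Fin n) // IsConj p.1 p.2} : ℝ) /
    (Nat.factorial n : ℝ) ^ 2

/-- κ(Aₙ): the probability that two independent uniform elements of Aₙ are conjugate
in Aₙ. -/
noncomputable def kappaA (n : ℕ) : ℝ :=
  (Nat.card {p : alternatingGroup (Fin n) × alternatingGroup (Fin n) //
      IsConj p.1 p.2} : ℝ) / (Nat.card (alternatingGroup (Fin n)) : ℝ) ^ 2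

namespace QAux
open Equiv.Perm Finset

variable {n l : ℕ}

/-- The predicate defining the pairs counted by `Q`. -/
def Pp (n : ℕ) (p : Perm (Fin n) × Perm (Fin n)) : Prop :=
  p.1.cycleType = p.2.cycleType ∧ p.1.cycleType.Nodup ∧
    (∀ i ∈ p.1.cycleType, Odd i) ∧ n - p.1.cycleType.sum ≤ 1

lemma exists_cd (σ : Perm (Fin n)) (h : l ∈ σ.cycleType) :
    ∃ cd : Perm (Fin n) × Perm (Fin n), σ = cd.1 * cd.2 ∧ cd.1.Disjoint cd.2 ∧
      cd.1.IsCycle ∧ cd.1.support.card = l := by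
  obtain ⟨c, t, h1, h2, h3, h4⟩ := mem_cycleType_iff.mp h
  exact ⟨(c, t), h1, h2, h3, h4⟩

/-- A chosen cycle of length `l` in `σ`. -/
noncomputable def cyc (σ : Perm (Fin n)) (h : l ∈ σ.cycleType) : Perm (Fin n) :=
  (exists_cd σ h).choose.1

/-- The complementary part: `σ = cyc * dd`. -/
noncomputable def dd (σ : Perm (Fin n)) (h : l ∈ σ.cycleType) : Perm (Fin n) :=
  (exists_cd σ h).choose.2

lemma cd_spec (σ : Perm (Fin n)) (h : l ∈ σ.cycleType) :
    σ = cyc σ h * dd σ h ∧ (cyc σ h).Disjoint (dd σ h) ∧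
      (cyc σ h).IsCycle ∧ (cyc σ h).support.card = l :=
  (exists_cd σ h).choose_spec

lemma support_cyc_nonempty (σ : Perm (Fin n)) (h : l ∈ σ.cycleType) :
    (cyc σ h).support.Nonempty := by
  have h2 := two_le_of_mem_cycleType h
  refine Finset.card_pos.mp ?_
  rw [(cd_spec σ h).2.2.2]; omega

/-- A canonical point on the chosen cycle. -/
noncomputable def pt (σ : Perm (Fin n)) (h : l ∈ σ.cycleType) : Fin n :=
  (cyc σ h).support.min' (support_cyc_nonempty σ h)

lemma pt_mem (σ : Perm (Fin n)) (h : l ∈ σ.cycleType) : pt σ h ∈ (cyc σ h).support :=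
  Finset.min'_mem _ _

lemma orderOf_cyc (σ : Perm (Fin n)) (h : l ∈ σ.cycleType) : orderOf (cyc σ h) = l :=
  ((cd_spec σ h).2.2.1.orderOf).trans (cd_spec σ h).2.2.2

lemma cyc_pow_inj (σ : Perm (Fin n)) (h : l ∈ σ.cycleType) {i j : ℕ}
    (hi : i < l) (hj : j < l)
    (hij : ((cyc σ h) ^ i) (pt σ h) = ((cyc σ h) ^ j) (pt σ h)) : i = j := by
  have key : ∀ {a b : ℕ}, a ≤ b → b < l →
      ((cyc σ h) ^ a) (pt σ h) = ((cyc σ h) ^ b) (pt σ h) → a = b := by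
    intro a b hab hbl hh
    have hba : ((cyc σ h) ^ a) (((cyc σ h) ^ (b - a)) (pt σ h)) = ((cyc σ h) ^ a) (pt σ h) := by
      rw [← Equiv.Perm.mul_apply, ← pow_add]
      rw [show a + (b - a) = b by omega]
      exact hh.symm
    have hfix : ((cyc σ h) ^ (b - a)) (pt σ h) = pt σ h := ((cyc σ h) ^ a).injective hba
    have hone : (cyc σ h) ^ (b - a) = 1 :=
      ((cd_spec σ h).2.2.1.pow_eq_one_iff' (mem_support.mp (pt_mem σ h))).mpr hfix
    have hdvd : orderOf (cyc σ h) ∣ b - a := orderOf_dvd_of_pow_eq_one hone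
    rw [orderOf_cyc σ h] at hdvd
    have := Nat.eq_zero_of_dvd_of_lt hdvd
    omega
  rcases le_total i j with hle | hle
  · exact key hle hj hij
  · exact (key hle hi hij.symm).symm

lemma cyc_pow_mod (σ : Perm (Fin n)) (h : l ∈ σ.cycleType) (m : ℕ) :
    ((cyc σ h) ^ m) (pt σ h) = ((cyc σ h) ^ (m % l)) (pt σ h) := by
  conv_lhs => rw [← pow_mod_orderOf, orderOf_cyc σ h]

/-- The embedding listing the chosen cycle starting at the `i`-th point. -/
noncomputable def emb (σ : Perm (Fin n)) (h : l ∈ σ.cycleType) (i : Fin l) :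
    Fin l ↪ Fin n :=
  ⟨fun j => ((cyc σ h) ^ ((i : ℕ) + (j : ℕ))) (pt σ h), by
    intro j j' hjj
    simp only [pow_add, Equiv.Perm.mul_apply] at hjj
    exact Fin.ext (cyc_pow_inj σ h j.isLt j'.isLt (((cyc σ h) ^ (i : ℕ)).injective hjj))⟩

lemma emb_apply (σ : Perm (Fin n)) (h : l ∈ σ.cycleType) (i j : Fin l) :
    emb σ h i j = ((cyc σ h) ^ ((i : ℕ) + (j : ℕ))) (pt σ h) := rfl

lemma emb_mem (σ : Perm (Fin n)) (h : l ∈ σ.cycleType) (i j : Fin l) :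
    emb σ h i j ∈ (cyc σ h).support := by
  rw [emb_apply]
  exact pow_apply_mem_support.mpr (pt_mem σ h)

lemma image_emb (σ : Perm (Fin n)) (h : l ∈ σ.cycleType) (i : Fin l) :
    Finset.univ.image (emb σ h i) = (cyc σ h).support := by
  refine Finset.eq_of_subset_of_card_le ?_ ?_
  · intro x hx
    obtain ⟨j, _, rfl⟩ := Finset.mem_image.mp hx
    exact emb_mem σ h i j
  · rw [(cd_spec σ h).2.2.2, Finset.card_image_of_injective _ (emb σ h i).injective,
      Finset.card_univ, Fintype.card_fin]

lemma cyc_emb (σ : Perm (Fin n)) (h : l ∈ σ.cycleType) [NeZero l] (i j : Fin l) :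
    (cyc σ h) (emb σ h i j) = emb σ h i (j + 1) := by
  have h1 : (cyc σ h) (emb σ h i j) = ((cyc σ h) ^ ((i : ℕ) + (j : ℕ) + 1)) (pt σ h) := by
    rw [emb_apply, ← Equiv.Perm.mul_apply, ← pow_succ']
  have hmod : ((i : ℕ) + (j : ℕ) + 1) % l = ((i : ℕ) + ((j + 1 : Fin l) : ℕ)) % l := by
    have hval : ((j + 1 : Fin l) : ℕ) = ((j : ℕ) + 1 % l) % l := by
      rw [Fin.val_add, Fin.val_one']
    rw [hval]
    have h2 : ((j : ℕ) + 1 % l) % l ≡ (j : ℕ) + 1 [MOD l] :=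
      (Nat.mod_modEq _ l).trans (Nat.ModEq.add_left _ (Nat.mod_modEq 1 l))
    have h3 : (i : ℕ) + (((j : ℕ) + 1 % l) % l) ≡ (i : ℕ) + ((j : ℕ) + 1) [MOD l] :=
      Nat.ModEq.add_left _ h2
    rw [Nat.add_assoc]
    exact h3.symm
  rw [h1, emb_apply, cyc_pow_mod σ h ((i : ℕ) + (j : ℕ) + 1),
    cyc_pow_mod σ h ((i : ℕ) + ((j + 1 : Fin l) : ℕ)), hmod]

lemma emb_inj' {σ σ' : Perm (Fin n)} (h : l ∈ σ.cycleType) (h' : l ∈ σ'.cycleType)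
    {i i' : Fin l} (he : emb σ h i = emb σ' h' i') :
    cyc σ h = cyc σ' h' ∧ i = i' := by
  haveI : NeZero l := ⟨i.pos.ne'⟩
  have hsupp : (cyc σ h).support = (cyc σ' h').support := by
    rw [← image_emb σ h i, ← image_emb σ' h' i', he]
  have hcc : cyc σ h = cyc σ' h' := by
    apply Equiv.ext
    intro x
    by_cases hx : x ∈ (cyc σ h).support
    · rw [← image_emb σ h i] at hx
      obtain ⟨j, _, rfl⟩ := Finset.mem_image.mp hx
      rw [cyc_emb σ h i j, show emb σ h i j = emb σ' h' i' j by rw [he],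
        cyc_emb σ' h' i' j, he]
    · have hx' : x ∉ (cyc σ' h').support := hsupp ▸ hx
      rw [notMem_support.mp hx, notMem_support.mp hx']
  have hpt : pt σ h = pt σ' h' := by
    simp only [pt, hcc]
  have hl : 0 < l := i.pos
  have hii : i = i' := by
    have h0 := congrFun (congrArg (fun (f : Fin l ↪ Fin n) => (f : Fin l → Fin n)) he) ⟨0, hl⟩
    simp only [emb_apply] at h0
    rw [hcc, hpt] at h0
    exact Fin.ext (cyc_pow_inj σ' h' (by simpa using i.isLt) (by simpa using i'.isLt)
      (by simpa using h0))
  exact ⟨hcc, hii⟩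

/-- The complement of the support of the chosen cycle. -/
noncomputable def compl' (σ : Perm (Fin n)) (h : l ∈ σ.cycleType) : Finset (Fin n) :=
  (cyc σ h).supportᶜ

lemma card_compl' (σ : Perm (Fin n)) (h : l ∈ σ.cycleType) :
    (compl' σ h).card = n - l := by
  rw [compl', Finset.card_compl, (cd_spec σ h).2.2.2, Fintype.card_fin]

lemma dd_fix (σ : Perm (Fin n)) (h : l ∈ σ.cycleType) {x : Fin n}
    (hx : x ∈ (cyc σ h).support) : dd σ h x = x := by
  rcases (cd_spec σ h).2.1 x with hc | hd
  · exact absurd hc (mem_support.mp hx)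
  · exact hd

lemma dd_mem_iff (σ : Perm (Fin n)) (h : l ∈ σ.cycleType) :
    ∀ x : Fin n, x ∈ compl' σ h ↔ dd σ h x ∈ compl' σ h := by
  intro x
  by_cases hx : x ∈ (dd σ h).support
  · have h1 : x ∉ (cyc σ h).support :=
      Finset.disjoint_right.mp (cd_spec σ h).2.1.disjoint_support hx
    have h2 : dd σ h x ∉ (cyc σ h).support :=
      Finset.disjoint_right.mp (cd_spec σ h).2.1.disjoint_support
        (apply_mem_support.mpr hx)
    simp [compl', h1, h2]
  · rw [notMem_support.mp hx]

/-- The permutation induced on `Fin (n - l)` by `dd`. -/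
noncomputable def rest (σ : Perm (Fin n)) (h : l ∈ σ.cycleType) : Perm (Fin (n - l)) :=
  ((compl' σ h).equivFinOfCardEq (card_compl' σ h)).permCongr
    ((dd σ h).subtypePerm (fun x => (dd_mem_iff σ h x).symm))

lemma extend_subtypePerm {m : ℕ} (D : Perm (Fin n)) (t : Finset (Fin n))
    (hmem : ∀ x, x ∈ t ↔ D x ∈ t) (hfix : ∀ x ∉ t, D x = x) (f : ↥t ≃ Fin m) :
    (f.permCongr (D.subtypePerm (fun x => (hmem x).symm))).extendDomain f.symm = D := by
  apply Equiv.ext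
  intro x
  by_cases hx : x ∈ t
  · rw [Perm.extendDomain_apply_subtype _ _ hx]
    simp
  · rw [Perm.extendDomain_apply_not_subtype _ _ hx]
    exact (hfix x hx).symm

/-- Rebuild a permutation of `Fin n` from its complementary data; takes no proof
arguments so that it can be rewritten. -/
noncomputable def rebuild (t : Finset (Fin n)) (g : Perm (Fin (n - l))) : Perm (Fin n) :=
  if ht : t.card = n - l then g.extendDomain (t.equivFinOfCardEq ht).symm else 1

lemma dd_eq_rebuild (σ : Perm (Fin n)) (h : l ∈ σ.cycleType) :
    dd σ h = rebuild (compl' σ h) (rest σ h) := by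
  rw [rebuild, dif_pos (card_compl' σ h), rest]
  exact (extend_subtypePerm (dd σ h) (compl' σ h) (dd_mem_iff σ h)
    (fun x hx => dd_fix σ h (by simpa [compl'] using hx)) _).symm

lemma rest_cycleType (σ : Perm (Fin n)) (h : l ∈ σ.cycleType) :
    l ::ₘ (rest σ h).cycleType = σ.cycleType := by
  have h1 : (dd σ h).cycleType = (rest σ h).cycleType := by
    rw [dd_eq_rebuild σ h, rebuild, dif_pos (card_compl' σ h)]
    exact cycleType_extendDomain _
  have h2 := (cd_spec σ h).2.1.cycleType_mul
  conv_rhs => rw [(cd_spec σ h).1]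
  rw [h2, (cd_spec σ h).2.2.1.cycleType, (cd_spec σ h).2.2.2, h1]
  simp [Multiset.singleton_add]

lemma reconstruct {σ σ' : Perm (Fin n)} (h : l ∈ σ.cycleType) (h' : l ∈ σ'.cycleType)
    {i i' : Fin l} (he : emb σ h i = emb σ' h' i') (hr : rest σ h = rest σ' h') :
    σ = σ' ∧ i = i' := by
  obtain ⟨hcc, hii⟩ := emb_inj' h h' he
  have hcompl : compl' σ h = compl' σ' h' := by rw [compl', compl', hcc]
  have hdd : dd σ h = dd σ' h' := by
    rw [dd_eq_rebuild σ h, dd_eq_rebuild σ' h', hcompl, hr]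
  refine ⟨?_, hii⟩
  rw [(cd_spec σ h).1, (cd_spec σ' h').1, hcc, hdd]

lemma rest_mem {p : Perm (Fin n) × Perm (Fin n)} (hp : Pp n p)
    (h1 : l ∈ p.1.cycleType) (h2 : l ∈ p.2.cycleType) :
    Pp (n - l) (rest p.1 h1, rest p.2 h2) := by
  obtain ⟨hct, hnd, hodd, hsum⟩ := hp
  have e1 := rest_cycleType p.1 h1
  have e2 := rest_cycleType p.2 h2
  have hsc : p.1.cycleType.sum ≤ n := by
    rw [sum_cycleType]
    exact le_trans (Finset.card_le_univ _) (le_of_eq (by simp))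
  refine ⟨?_, ?_, ?_, ?_⟩
  · have : l ::ₘ (rest p.1 h1).cycleType = l ::ₘ (rest p.2 h2).cycleType := by
      rw [e1, e2, hct]
    exact (Multiset.cons_inj_right l).mp this
  · have := e1 ▸ hnd
    exact (Multiset.nodup_cons.mp this).2
  · intro i hi
    exact hodd i (by rw [← e1]; exact Multiset.mem_cons_of_mem hi)
  · have hls : l + (rest p.1 h1).cycleType.sum = p.1.cycleType.sum := by
      rw [← e1, Multiset.sum_cons]
    simp only [Prod.fst]
    omega

lemma key (n l : ℕ) (hl : l ≤ n) :
    l ^ 2 * Nat.card {p : Perm (Fin n) × Perm (Fin n) // Pp n p ∧ l ∈ p.1.cycleType} ≤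
      (n.descFactorial l) ^ 2 *
        Nat.card {p : Perm (Fin (n - l)) × Perm (Fin (n - l)) // Pp (n - l) p} := by
  classical
  let S := {p : Perm (Fin n) × Perm (Fin n) // Pp n p ∧ l ∈ p.1.cycleType}
  let T := {p : Perm (Fin (n - l)) × Perm (Fin (n - l)) // Pp (n - l) p}
  have h2mem : ∀ p : S, l ∈ p.1.2.cycleType := fun p => p.2.1.1 ▸ p.2.2
  let F : (Fin l × Fin l) × S → ((Fin l ↪ Fin n) × (Fin l ↪ Fin n)) × T :=
    fun x => ⟨(emb x.2.1.1 x.2.2.2 x.1.1, emb x.2.1.2 (h2mem x.2) x.1.2),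
      ⟨(rest x.2.1.1 x.2.2.2, rest x.2.1.2 (h2mem x.2)), rest_mem x.2.2.1 x.2.2.2 (h2mem x.2)⟩⟩
  have hF : Function.Injective F := by
    intro a b hab
    have he1 : emb a.2.1.1 a.2.2.2 a.1.1 = emb b.2.1.1 b.2.2.2 b.1.1 :=
      congrArg (fun z : ((Fin l ↪ Fin n) × (Fin l ↪ Fin n)) × T => z.1.1) hab
    have he2 : emb a.2.1.2 (h2mem a.2) a.1.2 = emb b.2.1.2 (h2mem b.2) b.1.2 :=
      congrArg (fun z : ((Fin l ↪ Fin n) × (Fin l ↪ Fin n)) × T => z.1.2) hab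
    have hr1 : rest a.2.1.1 a.2.2.2 = rest b.2.1.1 b.2.2.2 :=
      congrArg (fun z : ((Fin l ↪ Fin n) × (Fin l ↪ Fin n)) × T => z.2.1.1) hab
    have hr2 : rest a.2.1.2 (h2mem a.2) = rest b.2.1.2 (h2mem b.2) :=
      congrArg (fun z : ((Fin l ↪ Fin n) × (Fin l ↪ Fin n)) × T => z.2.1.2) hab
    obtain ⟨hσ, hi⟩ := reconstruct _ _ he1 hr1
    obtain ⟨hτ, hj⟩ := reconstruct _ _ he2 hr2
    exact Prod.ext (Prod.ext hi hj) (Subtype.ext (Prod.ext hσ hτ))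
  have hcard := Nat.card_le_card_of_injective F hF
  have hNemb : Nat.card (Fin l ↪ Fin n) = n.descFactorial l := by
    rw [Nat.card_eq_fintype_card, Fintype.card_embedding_eq, Fintype.card_fin, Fintype.card_fin]
  have hNfin : Nat.card (Fin l) = l := by
    rw [Nat.card_eq_fintype_card, Fintype.card_fin]
  rw [Nat.card_prod, Nat.card_prod, Nat.card_prod, Nat.card_prod, hNemb, hNfin] at hcard
  rw [pow_two, pow_two]
  exact hcard

lemma cover (n k : ℕ) :
    Nat.card {p : Perm (Fin n) × Perm (Fin n) // Pp n p} ≤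
      Nat.card {p : Perm (Fin n) × Perm (Fin n) // Pp n p ∧ ∀ i ∈ p.1.cycleType, i < k} +
      ∑ l ∈ (Finset.Icc k n).filter (fun l => Odd l),
        Nat.card {p : Perm (Fin n) × Perm (Fin n) // Pp n p ∧ l ∈ p.1.cycleType} := by
  classical
  set fs := (Finset.Icc k n).filter (fun l => Odd l) with hfs
  let A := {p : Perm (Fin n) × Perm (Fin n) // Pp n p ∧ ∀ i ∈ p.1.cycleType, i < k}
  let B : ℕ → Type := fun l => {p : Perm (Fin n) × Perm (Fin n) // Pp n p ∧ l ∈ p.1.cycleType}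
  have hbig : ∀ p : {p : Perm (Fin n) × Perm (Fin n) // Pp n p},
      ¬(∀ i ∈ p.1.1.cycleType, i < k) → ∃ l, l ∈ fs ∧ l ∈ p.1.1.cycleType := by
    rintro ⟨p, hp⟩ hs
    push_neg at hs
    obtain ⟨i, hi, hki⟩ := hs
    refine ⟨i, ?_, hi⟩
    have hin : i ≤ n := le_trans (le_card_support_of_mem_cycleType hi)
      (le_trans (Finset.card_le_univ _) (le_of_eq (by simp)))
    simp only [hfs, Finset.mem_filter, Finset.mem_Icc]
    exact ⟨⟨hki, hin⟩, hp.2.2.1 i hi⟩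
  let G : {p : Perm (Fin n) × Perm (Fin n) // Pp n p} → A ⊕ (Σ l : fs, B l) :=
    fun p => if hs : ∀ i ∈ p.1.1.cycleType, i < k then Sum.inl ⟨p.1, p.2, hs⟩
      else Sum.inr ⟨⟨(hbig p hs).choose, (hbig p hs).choose_spec.1⟩,
        ⟨p.1, p.2, (hbig p hs).choose_spec.2⟩⟩
  have hG : Function.Injective G := by
    intro a b hab
    have hproj : ∀ p, (Sum.elim (fun x : A => x.1) (fun y : Σ l : fs, B l => y.2.1)) (G p)
        = p.1 := by
      intro p
      by_cases hs : ∀ i ∈ p.1.1.cycleType, i < k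
      · simp [G, dif_pos hs]
      · simp [G, dif_neg hs]
    have := (hproj a).symm.trans ((congrArg _ hab).trans (hproj b))
    exact Subtype.ext this
  have hcard := Nat.card_le_card_of_injective G hG
  rw [Nat.card_sum] at hcard
  have hsigma : Nat.card (Σ l : fs, B l) =
      ∑ l ∈ fs, Nat.card (B l) := by
    rw [Nat.card_eq_fintype_card, Fintype.card_sigma]
    rw [← Finset.sum_coe_sort fs (fun l => Nat.card (B l))]
    simp [Nat.card_eq_fintype_card]
  rw [hsigma] at hcard
  exact hcard

lemma small_le (n k : ℕ) :
    Nat.card {p : Perm (Fin n) × Perm (Fin n) // Pp n p ∧ ∀ i ∈ p.1.cycleType, i < k} ≤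
      Nat.card {σ : Perm (Fin n) // ∀ i ∈ σ.cycleType, i < k} ^ 2 := by
  rw [sq, ← Nat.card_prod]
  have : Function.Injective (fun p : {p : Perm (Fin n) × Perm (Fin n) //
      Pp n p ∧ ∀ i ∈ p.1.cycleType, i < k} =>
      ((⟨p.1.1, p.2.2⟩, ⟨p.1.2, by rw [← p.2.1.1]; exact p.2.2⟩) :
        {σ : Perm (Fin n) // ∀ i ∈ σ.cycleType, i < k} ×
        {σ : Perm (Fin n) // ∀ i ∈ σ.cycleType, i < k})) := by
    intro a b hab
    simp only [Prod.mk.injEq, Subtype.mk.injEq] at hab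
    exact Subtype.ext (Prod.ext hab.1 hab.2)
  exact Nat.card_le_card_of_injective _ this

end QAux

/-- Upper bound for Q(Sₙ): Proposition 2.3, first inequality. -/
theorem Q_upper_bound (n k : ℕ) (hk : 1 ≤ k) :
    Q n ≤ s k n ^ 2 +
      ∑ l ∈ (Finset.Icc k n).filter (fun l => Odd l), Q (n - l) / (l : ℝ) ^ 2 := by
  classical
  have hfact : (0 : ℝ) < (n.factorial : ℝ) ^ 2 := by positivity
  have hcov := QAux.cover n k
  calc Q n = (Nat.card {p : Perm (Fin n) × Perm (Fin n) // QAux.Pp n p} : ℝ) /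
      (n.factorial : ℝ) ^ 2 := rfl
    _ ≤ ((Nat.card {p : Perm (Fin n) × Perm (Fin n) //
          QAux.Pp n p ∧ ∀ i ∈ p.1.cycleType, i < k} : ℝ) +
        ∑ l ∈ (Finset.Icc k n).filter (fun l => Odd l),
          (Nat.card {p : Perm (Fin n) × Perm (Fin n) //
            QAux.Pp n p ∧ l ∈ p.1.cycleType} : ℝ)) / (n.factorial : ℝ) ^ 2 := by
        gcongr
        exact_mod_cast hcov
    _ = (Nat.card {p : Perm (Fin n) × Perm (Fin n) //
          QAux.Pp n p ∧ ∀ i ∈ p.1.cycleType, i < k} : ℝ) / (n.factorial : ℝ) ^ 2 +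
        ∑ l ∈ (Finset.Icc k n).filter (fun l => Odd l),
          (Nat.card {p : Perm (Fin n) × Perm (Fin n) //
            QAux.Pp n p ∧ l ∈ p.1.cycleType} : ℝ) / (n.factorial : ℝ) ^ 2 := by
        rw [add_div, Finset.sum_div]
    _ ≤ s k n ^ 2 + ∑ l ∈ (Finset.Icc k n).filter (fun l => Odd l),
          Q (n - l) / (l : ℝ) ^ 2 := by
        apply add_le_add
        · have h1 := QAux.small_le n k
          have hs : s k n = (Nat.card {σ : Perm (Fin n) //
              ∀ i ∈ σ.cycleType, i < k} : ℝ) / (n.factorial : ℝ) := rfl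
          rw [hs, div_pow]
          gcongr
          exact_mod_cast h1
        · apply Finset.sum_le_sum
          intro l hl
          obtain ⟨hmem, hodd⟩ := Finset.mem_filter.mp hl
          obtain ⟨hkl, hln⟩ := Finset.mem_Icc.mp hmem
          have hlpos : 0 < l := lt_of_lt_of_le (by omega : 0 < k) hkl
          have hlR : (0 : ℝ) < (l : ℝ) := by exact_mod_cast hlpos
          have hkey := QAux.key n l hln
          have hkeyR : (l : ℝ) ^ 2 * (Nat.card {p : Perm (Fin n) × Perm (Fin n) //
                QAux.Pp n p ∧ l ∈ p.1.cycleType} : ℝ) ≤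
              (n.descFactorial l : ℝ) ^ 2 *
                (Nat.card {p : Perm (Fin (n - l)) × Perm (Fin (n - l)) //
                  QAux.Pp (n - l) p} : ℝ) := by exact_mod_cast hkey
          have hfacteq : (n.factorial : ℝ) =
              ((n - l).factorial : ℝ) * (n.descFactorial l : ℝ) := by
            exact_mod_cast (Nat.factorial_mul_descFactorial hln).symm
          have hQnl : Q (n - l) = (Nat.card {p : Perm (Fin (n - l)) × Perm (Fin (n - l)) //
              QAux.Pp (n - l) p} : ℝ) / ((n - l).factorial : ℝ) ^ 2 := rfl
          rw [hQnl, div_div, div_le_div_iff₀ hfact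
            (mul_pos (by positivity) (pow_pos hlR 2)), hfacteq]
          have hmul := mul_le_mul_of_nonneg_left hkeyR
            (sq_nonneg (((n - l).factorial : ℝ)))
          nlinarith [hmul]
end

section
/- For all n ∈ ℕ and all k with n/2 < k ≤ n, Q(S_n) ≥ Σ_{l=k, l odd}^{n} Q(S_{n-l})/l^2. -/
open Equiv

namespace QLB

open Finset Equiv.Perm

variable {n m l k : ℕ}

/-- the "good pair" predicate underlying `Q`. -/
def good (m : ℕ) (p : Perm (Fin m) × Perm (Fin m)) : Prop :=
  p.1.cycleType = p.2.cycleType ∧ p.1.cycleType.Nodup ∧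
    (∀ i ∈ p.1.cycleType, Odd i) ∧ m - p.1.cycleType.sum ≤ 1

instance (m : ℕ) : DecidablePred (good m) := fun _ => by
  unfold good; infer_instance

def Gf (m : ℕ) : Finset (Perm (Fin m) × Perm (Fin m)) := univ.filter (good m)

lemma Q_eq (m : ℕ) : Q m = ((Gf m).card : ℝ) / (m.factorial : ℝ) ^ 2 := by
  have : Nat.card {p : Perm (Fin m) × Perm (Fin m) //
      p.1.cycleType = p.2.cycleType ∧ p.1.cycleType.Nodup ∧
      (∀ i ∈ p.1.cycleType, Odd i) ∧ m - p.1.cycleType.sum ≤ 1} = (Gf m).card := by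
    rw [Nat.card_eq_fintype_card, Gf]
    convert Fintype.card_subtype (p := good m) using 2
    rfl
  rw [Q, this]

lemma Q_small (hm : m ≤ 1) : Q m = 1 := by
  haveI : Subsingleton (Fin m) := by
    rcases Nat.le_one_iff_eq_zero_or_eq_one.mp hm with rfl | rfl <;> infer_instance
  have hall : ∀ p : Perm (Fin m) × Perm (Fin m),
      p.1.cycleType = p.2.cycleType ∧ p.1.cycleType.Nodup ∧
      (∀ i ∈ p.1.cycleType, Odd i) ∧ m - p.1.cycleType.sum ≤ 1 := by
    intro p
    have h1 : p.1.cycleType = 0 := by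
      rw [Subsingleton.elim p.1 1, cycleType_one]
    have h2 : p.2.cycleType = 0 := by
      rw [Subsingleton.elim p.2 1, cycleType_one]
    refine ⟨by rw [h1, h2], by rw [h1]; exact Multiset.nodup_zero, ?_, ?_⟩
    · rw [h1]; intro i hi; simp at hi
    · rw [h1]; simpa using hm
  rw [Q]
  rw [Nat.card_congr (Equiv.subtypeUnivEquiv hall), Nat.card_eq_fintype_card,
    Fintype.card_prod, Fintype.card_perm, Fintype.card_fin]
  push_cast
  rw [div_eq_one_iff_eq (by positivity)]
  ring

/-! ### Counting `l`-cycles -/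

noncomputable def Cyc (n l : ℕ) : Finset (Perm (Fin n)) :=
  @Finset.filter _ (fun c => c.IsCycle ∧ c.support.card = l) (Classical.decPred _) univ

lemma mem_Cyc {c : Perm (Fin n)} : c ∈ Cyc n l ↔ c.IsCycle ∧ c.support.card = l := by
  simp [Cyc]

/-- the list g(0), g(1), ..., g(l-1). -/
def L (hln : l ≤ n) (g : Perm (Fin n)) : List (Fin n) :=
  (List.finRange l).map fun i => g (Fin.castLE hln i)

lemma L_length (hln : l ≤ n) (g : Perm (Fin n)) : (L hln g).length = l := by
  simp [L]

lemma L_nodup (hln : l ≤ n) (g : Perm (Fin n)) : (L hln g).Nodup :=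
  (List.nodup_finRange l).map (g.injective.comp (Fin.castLE_injective hln))

lemma L_get (hln : l ≤ n) (g : Perm (Fin n)) (i : ℕ) (hi : i < l) :
    (L hln g)[i]'(by rw [L_length]; exact hi) = g (Fin.castLE hln ⟨i, hi⟩) := by
  simp [L, List.getElem_finRange]

lemma mem_L_iff (hln : l ≤ n) (g : Perm (Fin n)) (x : Fin n) :
    x ∈ L hln g ↔ ∃ i : Fin l, g (Fin.castLE hln i) = x := by
  simp [L]

noncomputable def Psi (hln : l ≤ n) (g : Perm (Fin n)) : Perm (Fin n) := (L hln g).formPerm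

lemma Psi_isCycle (hln : l ≤ n) (h2 : 2 ≤ l) (g : Perm (Fin n)) : (Psi hln g).IsCycle :=
  List.isCycle_formPerm (L_nodup hln g) (by rw [L_length]; exact h2)

lemma Psi_support (hln : l ≤ n) (h2 : 2 ≤ l) (g : Perm (Fin n)) :
    (Psi hln g).support = (L hln g).toFinset :=
  List.support_formPerm_of_nodup _ (L_nodup hln g) (fun x hx => by
    apply_fun List.length at hx
    rw [L_length] at hx
    simp at hx; omega)

lemma Psi_support_card (hln : l ≤ n) (h2 : 2 ≤ l) (g : Perm (Fin n)) :
    (Psi hln g).support.card = l := by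
  rw [Psi_support hln h2, List.card_toFinset, (L_nodup hln g).dedup, L_length]

lemma Psi_apply (hln : l ≤ n) (g : Perm (Fin n)) (i : ℕ) (hi : i + 1 < l) :
    Psi hln g (g (Fin.castLE hln ⟨i, by omega⟩)) = g (Fin.castLE hln ⟨i + 1, hi⟩) := by
  have h := List.formPerm_apply_getElem (L hln g) (L_nodup hln g) i
    (by rw [L_length]; omega)
  rw [L_get hln g i (by omega)] at h
  rw [Psi, h]
  simp only [L_length, Nat.mod_eq_of_lt hi]
  exact L_get hln g (i + 1) hi

lemma card_cyc (h2 : 2 ≤ l) (hln : l ≤ n) :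
    n.factorial ≤ (Cyc n l).card * (l * (n - l).factorial) := by
  classical
  have hl0 : 0 < l := by omega
  have hmaps : ∀ c ∈ (univ : Finset (Perm (Fin n))).image (Psi hln), c ∈ Cyc n l := by
    intro c hc
    rw [Finset.mem_image] at hc
    obtain ⟨g, -, rfl⟩ := hc
    exact mem_Cyc.mpr ⟨Psi_isCycle hln h2 g, Psi_support_card hln h2 g⟩
  have hfib : ∀ c ∈ (univ : Finset (Perm (Fin n))).image (Psi hln),
      (univ.filter fun g => Psi hln g = c).card ≤ l * (n - l).factorial := by
    intro c hc
    have hcl : c.support.card = l := (mem_Cyc.mp (hmaps c hc)).2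
    set c0 : Fin n := Fin.castLE hln ⟨0, hl0⟩ with hc0
    set idx : Fin (n - l) → Fin n := fun j => ⟨l + j.1, by omega⟩ with hidx
    have idx_inj : Function.Injective idx := by
      intro a b hab
      rw [hidx] at hab
      simp only [Fin.mk.injEq] at hab
      exact Fin.ext (by omega)
    have hhead : ∀ g : Perm (Fin n), Psi hln g = c → g c0 ∈ c.support := by
      intro g hg
      rw [← hg, Psi_support hln h2, List.mem_toFinset, mem_L_iff]
      exact ⟨⟨0, hl0⟩, rfl⟩
    have htail : ∀ g : Perm (Fin n), Psi hln g = c →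
        ∀ j : Fin (n - l), g (idx j) ∈ (c.supportᶜ : Finset (Fin n)) := by
      intro g hg j
      rw [Finset.mem_compl, ← hg, Psi_support hln h2, List.mem_toFinset, mem_L_iff]
      rintro ⟨i, hi⟩
      have := g.injective hi
      apply_fun Fin.val at this
      simp [hidx, Fin.val_fin_lt] at this
      omega
    have hembinj : ∀ g : Perm (Fin n), Function.Injective
        (fun j : Fin (n - l) => g (idx j)) := by
      intro g a b hab
      exact idx_inj (g.injective hab)
    rcases (univ.filter fun g => Psi hln g = c).eq_empty_or_nonempty with he | ⟨g₀, hg₀⟩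
    · rw [he]; simp
    · rw [Finset.mem_filter] at hg₀
      have hg₀' := hg₀.2
      haveI : Nonempty ({x // x ∈ c.support} ×
          (Fin (n - l) ↪ {x : Fin n // x ∈ (c.supportᶜ : Finset (Fin n))})) :=
        ⟨(⟨g₀ c0, hhead g₀ hg₀'⟩,
          ⟨fun j => ⟨g₀ (idx j), htail g₀ hg₀' j⟩, by
            intro a b hab
            simp only [Subtype.mk.injEq] at hab
            exact hembinj g₀ hab⟩)⟩
      set F : Perm (Fin n) → ({x // x ∈ c.support} ×
          (Fin (n - l) ↪ {x : Fin n // x ∈ (c.supportᶜ : Finset (Fin n))})) :=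
        fun g => if h : g c0 ∈ c.support ∧ ∀ j, g (idx j) ∈ (c.supportᶜ : Finset (Fin n)) then
          (⟨g c0, h.1⟩, ⟨fun j => ⟨g (idx j), h.2 j⟩, by
            intro a b hab
            simp only [Subtype.mk.injEq] at hab
            exact hembinj g hab⟩)
        else Classical.arbitrary _ with hF
      have hinj : Set.InjOn F ((univ.filter fun g => Psi hln g = c) : Finset (Perm (Fin n))) := by
        intro g hg g' hg' hFg
        rw [Finset.mem_coe, Finset.mem_filter] at hg hg'
        rw [hF] at hFg
        dsimp only at hFg
        rw [dif_pos ⟨hhead g hg.2, htail g hg.2⟩, dif_pos ⟨hhead g' hg'.2, htail g' hg'.2⟩] at hFg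
        have h1 : g c0 = g' c0 := by
          have := congrArg Prod.fst hFg
          exact Subtype.ext_iff.mp this
        have h2' : ∀ j : Fin (n - l), g (idx j) = g' (idx j) := by
          intro j
          have := congrArg Prod.snd hFg
          have := DFunLike.congr_fun this j
          exact Subtype.ext_iff.mp this
        have hstep : ∀ i : ℕ, ∀ hi : i < l,
            g (Fin.castLE hln ⟨i, hi⟩) = g' (Fin.castLE hln ⟨i, hi⟩) := by
          intro i
          induction i with
          | zero => intro hi; exact h1
          | succ i ih =>
            intro hi
            have hi' : i < l := by omega
            have e1 := Psi_apply hln g i hi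
            have e2 := Psi_apply hln g' i hi
            rw [hg.2] at e1
            rw [hg'.2] at e2
            rw [← e1, ← e2, ih hi']
        apply Equiv.ext
        intro x
        rcases lt_or_ge x.1 l with hx | hx
        · have hxeq : x = Fin.castLE hln ⟨x.1, hx⟩ := rfl
          rw [hxeq]
          exact hstep x.1 hx
        · have hj : x.1 - l < n - l := by omega
          have hxeq : x = idx ⟨x.1 - l, hj⟩ := by
            rw [hidx]; exact Fin.ext (by simp; omega)
          rw [hxeq]
          exact h2' ⟨x.1 - l, hj⟩
      have hcard := Finset.card_le_card_of_injOn F (fun a _ => Finset.mem_univ _) hinj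
      rw [Finset.card_univ] at hcard
      refine hcard.trans (le_of_eq ?_)
      rw [Fintype.card_prod, Fintype.card_embedding_eq]
      have e1 : Fintype.card {x // x ∈ c.support} = l := by
        rw [Fintype.card_coe, hcl]
      have e2 : Fintype.card {x : Fin n // x ∈ (c.supportᶜ : Finset (Fin n))} = n - l := by
        rw [Fintype.card_coe, Finset.card_compl, Fintype.card_fin, hcl]
      rw [e1, e2, Fintype.card_fin, Nat.descFactorial_self]
  calc n.factorial = (univ : Finset (Perm (Fin n))).card := by
        rw [Finset.card_univ, Fintype.card_perm, Fintype.card_fin]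
    _ ≤ (l * (n - l).factorial) * ((univ : Finset (Perm (Fin n))).image (Psi hln)).card :=
        Finset.card_le_mul_card_image _ _ hfib
    _ ≤ (l * (n - l).factorial) * (Cyc n l).card :=
        Nat.mul_le_mul_left _ (Finset.card_le_card hmaps)
    _ = (Cyc n l).card * (l * (n - l).factorial) := Nat.mul_comm _ _

/-! ### Extending a permutation of the complement of the support of a cycle -/

noncomputable def extPerm (n m : ℕ) (c : Perm (Fin n)) (σ' : Perm (Fin m)) : Perm (Fin n) :=
  if h : Fintype.card {x : Fin n // x ∈ (c.supportᶜ : Finset (Fin n))} = m then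
    σ'.extendDomain (Fintype.equivFinOfCardEq h).symm
  else 1

variable {c : Perm (Fin n)}

lemma extPerm_cycleType (h : Fintype.card {x : Fin n // x ∈ (c.supportᶜ : Finset (Fin n))} = m)
    (σ' : Perm (Fin m)) :
    (extPerm n m c σ').cycleType = σ'.cycleType := by
  rw [extPerm, dif_pos h, cycleType_extendDomain]

lemma extPerm_support (h : Fintype.card {x : Fin n // x ∈ (c.supportᶜ : Finset (Fin n))} = m)
    (σ' : Perm (Fin m)) :
    (extPerm n m c σ').support ⊆ c.supportᶜ := by
  rw [extPerm, dif_pos h]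
  intro x hx
  rw [support_extend_domain, Finset.mem_map] at hx
  obtain ⟨a, -, rfl⟩ := hx
  simpa using Subtype.prop ((Fintype.equivFinOfCardEq h).symm a)

lemma extPerm_disjoint (h : Fintype.card {x : Fin n // x ∈ (c.supportᶜ : Finset (Fin n))} = m)
    (σ' : Perm (Fin m)) :
    Perm.Disjoint c (extPerm n m c σ') :=
  Perm.disjoint_iff_disjoint_support.mpr (Finset.disjoint_left.mpr
    (fun a ha hb => (Finset.mem_compl.mp (extPerm_support h σ' hb)) ha))

lemma extPerm_inj (h : Fintype.card {x : Fin n // x ∈ (c.supportᶜ : Finset (Fin n))} = m)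
    {σ' τ' : Perm (Fin m)} (heq : extPerm n m c σ' = extPerm n m c τ') : σ' = τ' := by
  rw [extPerm, dif_pos h, extPerm, dif_pos h] at heq
  ext a
  have := congrArg (fun π : Perm (Fin n) =>
    π (((Fintype.equivFinOfCardEq h).symm) a)) heq
  simp only [Perm.extendDomain_apply_image] at this
  have h2 : ((Fintype.equivFinOfCardEq h).symm (σ' a))
      = ((Fintype.equivFinOfCardEq h).symm (τ' a)) := Subtype.ext this
  exact congrArg Fin.val ((Fintype.equivFinOfCardEq h).symm.injective h2)

lemma cycle_factor_unique {σ c d X Y : Perm (Fin n)} (hc : c.IsCycle) (hd : d.IsCycle)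
    (hcX : Perm.Disjoint c X) (hdY : Perm.Disjoint d Y)
    (hYc : Y.support.card < c.support.card)
    (h1 : σ = c * X) (h2 : σ = d * Y) : c = d := by
  have hcmem : c ∈ σ.cycleFactorsFinset := by
    rw [h1, hcX.cycleFactorsFinset_mul_eq_union, Finset.mem_union,
      hc.cycleFactorsFinset_eq_singleton]
    exact Or.inl (Finset.mem_singleton_self c)
  rw [h2, hdY.cycleFactorsFinset_mul_eq_union, Finset.mem_union,
    hd.cycleFactorsFinset_eq_singleton, Finset.mem_singleton] at hcmem
  rcases hcmem with hcd | hcY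
  · exact hcd
  · exfalso
    have hsub : c.support ⊆ Y.support := by
      intro a ha
      have hmem := (Perm.mem_cycleFactorsFinset_iff.mp hcY).2 a ha
      rw [Perm.mem_support] at ha ⊢
      rw [← hmem]
      exact ha
    have := Finset.card_le_card hsub
    omega

/-! ### The main counting lemma -/

def Al (n l : ℕ) : Finset (Perm (Fin n) × Perm (Fin n)) :=
  univ.filter fun p => good n p ∧ l ∈ p.1.cycleType

lemma hcard_of {c : Perm (Fin n)} (hc : c.support.card = l) :
    Fintype.card {x : Fin n // x ∈ (c.supportᶜ : Finset (Fin n))} = n - l := by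
  rw [Fintype.card_coe, Finset.card_compl, Fintype.card_fin, hc]

lemma card_Al (h2 : 2 ≤ l) (hln : l ≤ n) (h2l : n < 2 * l) (hodd : Odd l) :
    (Gf (n - l)).card * n.factorial ^ 2 ≤ (Al n l).card * (l * (n - l).factorial) ^ 2 := by
  classical
  have comp : ∀ (c : Perm (Fin n)) (σ' : Perm (Fin (n - l))), c.IsCycle → c.support.card = l →
      (c * extPerm n (n - l) c σ').cycleType = l ::ₘ σ'.cycleType := by
    intro c σ' hc hcl
    have h := hcard_of hcl
    rw [Perm.Disjoint.cycleType_mul (extPerm_disjoint h σ'), hc.cycleType, hcl, extPerm_cycleType h σ']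
    simp [Multiset.singleton_add]
  have sum_le : ∀ σ' : Perm (Fin (n - l)), σ'.cycleType.sum ≤ n - l := by
    intro σ'
    rw [sum_cycleType]
    exact le_trans (Finset.card_le_univ _) (by simp)
  have not_mem : ∀ σ' : Perm (Fin (n - l)), l ∉ σ'.cycleType := by
    intro σ' hmem
    have h1 : l ≤ σ'.cycleType.sum := by
      rw [← Multiset.cons_erase hmem, Multiset.sum_cons]
      exact Nat.le_add_right _ _
    have := sum_le σ'
    omega
  have ext_card : ∀ (c : Perm (Fin n)) (σ' : Perm (Fin (n - l))), c.support.card = l →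
      (extPerm n (n - l) c σ').support.card < l := by
    intro c σ' hcl
    have h1 := Finset.card_le_card (extPerm_support (hcard_of hcl) σ')
    rw [Finset.card_compl, Fintype.card_fin, hcl] at h1
    omega
  have key : (Cyc n l).card * ((Cyc n l).card * (Gf (n - l)).card) ≤ (Al n l).card := by
    set Φ : Perm (Fin n) × Perm (Fin n) × Perm (Fin (n - l)) × Perm (Fin (n - l)) →
        Perm (Fin n) × Perm (Fin n) := fun x =>
      (x.1 * extPerm n (n - l) x.1 x.2.2.1, x.2.1 * extPerm n (n - l) x.2.1 x.2.2.2) with hΦ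
    have hmapsto : ∀ x ∈ (Cyc n l) ×ˢ ((Cyc n l) ×ˢ (Gf (n - l))), Φ x ∈ Al n l := by
      rintro ⟨c₁, c₂, σ', τ'⟩ hx
      rw [Finset.mem_product] at hx
      obtain ⟨hx1, hx2⟩ := hx
      rw [Finset.mem_product] at hx2
      obtain ⟨hx21, hx22⟩ := hx2
      obtain ⟨hc1, hc1l⟩ := mem_Cyc.mp hx1
      obtain ⟨hc2, hc2l⟩ := mem_Cyc.mp hx21
      obtain ⟨hTeq, hnd, hoddm, hcov⟩ : σ'.cycleType = τ'.cycleType ∧ σ'.cycleType.Nodup ∧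
          (∀ i ∈ σ'.cycleType, Odd i) ∧ n - l - σ'.cycleType.sum ≤ 1 :=
        (Finset.mem_filter.mp hx22).2
      rw [Al, Finset.mem_filter]
      rw [hΦ]
      dsimp only
      simp only [good]
      rw [comp c₁ σ' hc1 hc1l, comp c₂ τ' hc2 hc2l]
      refine ⟨Finset.mem_univ _, ⟨?_, ?_, ?_, ?_⟩, Multiset.mem_cons_self l _⟩
      · rw [hTeq]
      · exact Multiset.nodup_cons.mpr ⟨not_mem σ', hnd⟩
      · intro i hi
        rcases Multiset.mem_cons.mp hi with rfl | hi
        · exact hodd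
        · exact hoddm i hi
      · rw [Multiset.sum_cons]
        have := hcov
        have := sum_le σ'
        omega
    have hinj : Set.InjOn Φ ((Cyc n l) ×ˢ ((Cyc n l) ×ˢ (Gf (n - l))) :
        Finset (Perm (Fin n) × Perm (Fin n) × Perm (Fin (n - l)) × Perm (Fin (n - l)))) := by
      rintro ⟨c₁, c₂, σ', τ'⟩ hx ⟨d₁, d₂, ρ', π'⟩ hy hxy
      rw [Finset.mem_coe, Finset.mem_product] at hx hy
      obtain ⟨hx1, hx2⟩ := hx
      rw [Finset.mem_product] at hx2
      obtain ⟨hx21, -⟩ := hx2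
      obtain ⟨hy1, hy2⟩ := hy
      rw [Finset.mem_product] at hy2
      obtain ⟨hy21, -⟩ := hy2
      obtain ⟨hc1, hc1l⟩ := mem_Cyc.mp hx1
      obtain ⟨hc2, hc2l⟩ := mem_Cyc.mp hx21
      obtain ⟨hd1, hd1l⟩ := mem_Cyc.mp hy1
      obtain ⟨hd2, hd2l⟩ := mem_Cyc.mp hy21
      rw [hΦ] at hxy
      dsimp only at hxy
      have hfst := congrArg Prod.fst hxy
      have hsnd := congrArg Prod.snd hxy
      dsimp only at hfst hsnd
      have e1 : c₁ = d₁ := by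
        refine cycle_factor_unique hc1 hd1 (extPerm_disjoint (hcard_of hc1l) σ')
          (extPerm_disjoint (hcard_of hd1l) ρ') ?_ rfl hfst
        rw [hc1l]
        exact ext_card d₁ ρ' hd1l
      have e2 : c₂ = d₂ := by
        refine cycle_factor_unique hc2 hd2 (extPerm_disjoint (hcard_of hc2l) τ')
          (extPerm_disjoint (hcard_of hd2l) π') ?_ rfl hsnd
        rw [hc2l]
        exact ext_card d₂ π' hd2l
      subst e1
      subst e2
      have e3 : σ' = ρ' := extPerm_inj (hcard_of hc1l) (mul_left_cancel hfst)
      have e4 : τ' = π' := extPerm_inj (hcard_of hc2l) (mul_left_cancel hsnd)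
      rw [e3, e4]
    have := Finset.card_le_card_of_injOn Φ hmapsto hinj
    rwa [Finset.card_product, Finset.card_product] at this
  calc (Gf (n - l)).card * n.factorial ^ 2
      ≤ (Gf (n - l)).card * ((Cyc n l).card * (l * (n - l).factorial)) ^ 2 :=
        Nat.mul_le_mul_left _ (Nat.pow_le_pow_left (card_cyc h2 hln) 2)
    _ = ((Cyc n l).card * ((Cyc n l).card * (Gf (n - l)).card)) * (l * (n - l).factorial) ^ 2 := by
        ring
    _ ≤ (Al n l).card * (l * (n - l).factorial) ^ 2 := Nat.mul_le_mul_right _ key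

lemma sum_Al (hk : n < 2 * k) :
    ∑ l ∈ (Finset.Icc k n).filter (fun l => Odd l), (Al n l).card ≤ (Gf n).card := by
  classical
  have hd : ∀ l₁ ∈ (Finset.Icc k n).filter (fun l => Odd l),
      ∀ l₂ ∈ (Finset.Icc k n).filter (fun l => Odd l), l₁ ≠ l₂ →
      Disjoint (Al n l₁) (Al n l₂) := by
    intro l₁ h₁ l₂ h₂ hne
    rw [Finset.disjoint_left]
    intro p hp1 hp2
    rw [Al, Finset.mem_filter] at hp1 hp2
    obtain ⟨-, hg, hm1⟩ := hp1
    obtain ⟨-, -, hm2⟩ := hp2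
    simp only [Finset.mem_filter, Finset.mem_Icc] at h₁ h₂
    have h3 : l₂ ∈ p.1.cycleType.erase l₁ := (Multiset.mem_erase_of_ne hne.symm).mpr hm2
    have hsum : l₁ + l₂ ≤ p.1.cycleType.sum := by
      rw [← Multiset.cons_erase hm1, Multiset.sum_cons]
      have h4 : l₂ ≤ (p.1.cycleType.erase l₁).sum := by
        rw [← Multiset.cons_erase h3, Multiset.sum_cons]
        exact Nat.le_add_right _ _
      omega
    have hsum2 : p.1.cycleType.sum ≤ n := by
      rw [sum_cycleType]
      exact le_trans (Finset.card_le_univ _) (by simp)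
    omega
  rw [← Finset.card_biUnion hd]
  apply Finset.card_le_card
  intro p hp
  rw [Finset.mem_biUnion] at hp
  obtain ⟨l, -, hl⟩ := hp
  rw [Al, Finset.mem_filter] at hl
  rw [Gf, Finset.mem_filter]
  exact ⟨Finset.mem_univ _, hl.2.1⟩

end QLB

/-- Lower bound for Q(Sₙ) when n/2 < k ≤ n: Proposition 2.3, second inequality. -/
theorem Q_lower_bound (n k : ℕ) (hk : n < 2 * k) (hkn : k ≤ n) :
    ∑ l ∈ (Finset.Icc k n).filter (fun l => Odd l), Q (n - l) / (l : ℝ) ^ 2 ≤ Q n := by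
  rcases Nat.lt_or_ge n 2 with hn | hn
  · interval_cases n
    · exact absurd hkn (by omega)
    · have hk1 : k = 1 := by omega
      subst hk1
      have hfil : (Finset.Icc 1 1).filter (fun l => Odd l) = {1} := by
        rw [Finset.Icc_self, Finset.filter_singleton, if_pos (by norm_num : Odd 1)]
      rw [hfil, Finset.sum_singleton]
      rw [QLB.Q_small (by norm_num : (1:ℕ) - 1 ≤ 1), QLB.Q_small (le_refl 1)]
      norm_num
  · have hk2 : 2 ≤ k := by omega
    have hfact : (0:ℝ) < (n.factorial : ℝ) ^ 2 := by positivity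
    rw [QLB.Q_eq n]
    calc ∑ l ∈ (Finset.Icc k n).filter (fun l => Odd l), Q (n - l) / (l : ℝ) ^ 2
        ≤ ∑ l ∈ (Finset.Icc k n).filter (fun l => Odd l),
          ((QLB.Al n l).card : ℝ) / (n.factorial : ℝ) ^ 2 := by
          apply Finset.sum_le_sum
          intro l hl
          simp only [Finset.mem_filter, Finset.mem_Icc] at hl
          obtain ⟨⟨hkl, hln⟩, hodd⟩ := hl
          have h2 : 2 ≤ l := le_trans hk2 hkl
          have h2l : n < 2 * l := by omega
          rw [QLB.Q_eq (n - l), div_div, div_le_div_iff₀ (by positivity) hfact]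
          have hnat := QLB.card_Al h2 hln h2l hodd
          have hcast : ((QLB.Gf (n - l)).card : ℝ) * ((n.factorial : ℝ)) ^ 2
              ≤ ((QLB.Al n l).card : ℝ) * ((l : ℝ) * ((n - l).factorial : ℝ)) ^ 2 := by
            exact_mod_cast hnat
          calc ((QLB.Gf (n - l)).card : ℝ) * (n.factorial : ℝ) ^ 2
              ≤ ((QLB.Al n l).card : ℝ) * ((l : ℝ) * ((n - l).factorial : ℝ)) ^ 2 := hcast
            _ = ((QLB.Al n l).card : ℝ) * (((n - l).factorial : ℝ) ^ 2 * (l : ℝ) ^ 2) := by ring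
      _ = (∑ l ∈ (Finset.Icc k n).filter (fun l => Odd l), ((QLB.Al n l).card : ℝ))
            / (n.factorial : ℝ) ^ 2 := by rw [Finset.sum_div]
      _ ≤ ((QLB.Gf n).card : ℝ) / (n.factorial : ℝ) ^ 2 := by
          gcongr
          exact_mod_cast QLB.sum_Al hk
end

section
/- For all n, k ∈ ℕ with 0 < k < n/2, Σ_{l=⌈n/2⌉}^{n-k-1} 1/(l^2 (n-l)^2) ≤ 1/(n^2 k) + 2·log(n/k)/n^3. -/
open Equiv

private lemma tele_aux (f : ℕ → ℝ) (a b : ℕ) (h : a ≤ b + 1) :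
    ∑ l ∈ Finset.Icc a b, (f (l + 1) - f l) = f (b + 1) - f a := by
  rw [← Finset.Ico_add_one_right_eq_Icc, Finset.sum_Ico_eq_sub _ h, Finset.sum_range_sub,
    Finset.sum_range_sub]
  ring

private lemma inv_sq_le_aux (x : ℝ) (hx : 2 ≤ x) : 1 / x ^ 2 ≤ 1 / (x - 1) - 1 / x := by
  have h1 : (0:ℝ) < x - 1 := by linarith
  have h0 : (0:ℝ) < x := by linarith
  rw [div_sub_div _ _ (ne_of_gt h1) (ne_of_gt h0), div_le_div_iff₀ (by positivity) (by positivity)]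
  nlinarith

private lemma inv_le_log_aux (x : ℝ) (hx : 2 ≤ x) :
    1 / x ≤ Real.log x - Real.log (x - 1) := by
  have h1 : (0:ℝ) < x - 1 := by linarith
  have h0 : (0:ℝ) < x := by linarith
  have h := Real.log_le_sub_one_of_pos (show (0:ℝ) < (x-1)/x by positivity)
  rw [Real.log_div (ne_of_gt h1) (ne_of_gt h0)] at h
  have hd : (x - 1) / x - 1 = -(1/x) := by field_simp; ring
  linarith [hd ▸ h]

private lemma id_aux (x y : ℝ) (hx : 0 < x) (hy : 0 < y) :
    1 / (x^2 * y^2) = 1/(x+y)^2 * (1/x^2 + 1/y^2) + 2/(x+y)^3 * (1/x + 1/y) := by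
  have hs : (0:ℝ) < x + y := by linarith
  field_simp
  ring

private noncomputable def Gf (N : ℝ) (l : ℕ) : ℝ :=
  1/N^2 * (-(1/((l:ℝ)-1)) + 1/(N-(l:ℝ))) +
    2/N^3 * (Real.log ((l:ℝ)-1) - Real.log (N-(l:ℝ)))

private lemma term_bound (N x : ℝ) (hx : 2 ≤ x) (hy : 2 ≤ N - x) :
    1 / (x ^ 2 * (N - x) ^ 2) ≤
      (1/N^2 * (-(1/(x + 1 - 1)) + 1/(N-(x+1))) +
        2/N^3 * (Real.log (x + 1 - 1) - Real.log (N-(x+1)))) -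
      (1/N^2 * (-(1/(x-1)) + 1/(N-x)) +
        2/N^3 * (Real.log (x-1) - Real.log (N-x))) := by
  have hN : (4:ℝ) ≤ N := by linarith
  have hNx : N - (x + 1) = (N - x) - 1 := by ring
  have hx1 : x + 1 - 1 = x := by ring
  rw [hNx, hx1]
  set y := N - x with hy'
  have hxy : N = x + y := by rw [hy']; ring
  have hid : 1 / (x^2 * y^2) = 1/N^2 * (1/x^2 + 1/y^2) + 2/N^3 * (1/x + 1/y) := by
    rw [hxy]; exact id_aux x y (by linarith) (by linarith)
  rw [hid]
  have h1 := inv_sq_le_aux x hx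
  have h2 := inv_sq_le_aux y hy
  have h3 := inv_le_log_aux x hx
  have h4 := inv_le_log_aux y hy
  have e : (1/N^2 * (-(1/x) + 1/(y-1)) + 2/N^3 * (Real.log x - Real.log (y-1))) -
      (1/N^2 * (-(1/(x-1)) + 1/y) + 2/N^3 * (Real.log (x-1) - Real.log y)) =
      1/N^2 * ((1/(x-1) - 1/x) + (1/(y-1) - 1/y)) +
      2/N^3 * ((Real.log x - Real.log (x-1)) + (Real.log y - Real.log (y-1))) := by ring
  rw [e]
  gcongr

/-- For 0 < k < n/2, the sum Σ_{l=⌈n/2⌉}^{n-k-1} 1/(l²(n-l)²) is at most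
1/(n²k) + 2·log(n/k)/n³. -/
theorem sum_inverse_squares_bound (n k : ℕ) (hk : 0 < k) (hkn : 2 * k < n) :
    ∑ l ∈ Finset.Icc ((n + 1) / 2) (n - k - 1),
        1 / ((l : ℝ) ^ 2 * ((n : ℝ) - (l : ℝ)) ^ 2) ≤
      1 / ((n : ℝ) ^ 2 * (k : ℝ)) + 2 * Real.log ((n : ℝ) / (k : ℝ)) / (n : ℝ) ^ 3 := by
  have hK0 : (0:ℝ) < (k:ℝ) := by exact_mod_cast hk
  have hK1 : (1:ℝ) ≤ (k:ℝ) := by exact_mod_cast hk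
  have hN0 : (0:ℝ) < (n:ℝ) := by exact_mod_cast (by omega : 0 < n)
  have hKN : (k:ℝ) ≤ (n:ℝ) := by exact_mod_cast (by omega : k ≤ n)
  set a := (n + 1) / 2 with ha
  set b := n - k - 1 with hb
  by_cases hab : a ≤ b
  · -- nonempty case
    have hka : k + 1 ≤ a := by omega
    have hbk : b + k + 1 = n := by omega
    have hbR : (b:ℝ) = (n:ℝ) - (k:ℝ) - 1 := by
      have := congrArg (fun m : ℕ => (m:ℝ)) hbk
      push_cast at this; linarith
    have haR2 : (2:ℝ) ≤ (a:ℝ) := by exact_mod_cast (by omega : 2 ≤ a)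
    have hkaR : (k:ℝ) + 1 ≤ (a:ℝ) := by exact_mod_cast hka
    have hNA : (2:ℝ) ≤ (n:ℝ) - (a:ℝ) := by
      have h1 : a + k + 1 ≤ n := by omega
      have h2 := (by exact_mod_cast h1 : (a:ℝ) + (k:ℝ) + 1 ≤ (n:ℝ))
      linarith
    calc ∑ l ∈ Finset.Icc a b, 1 / ((l : ℝ) ^ 2 * ((n : ℝ) - (l : ℝ)) ^ 2)
        ≤ ∑ l ∈ Finset.Icc a b, (Gf (n:ℝ) (l+1) - Gf (n:ℝ) l) := by
          apply Finset.sum_le_sum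
          intro l hl
          rw [Finset.mem_Icc] at hl
          have hl2 : (2:ℝ) ≤ (l:ℝ) := le_trans haR2 (by exact_mod_cast hl.1)
          have hlr : (2:ℝ) ≤ (n:ℝ) - (l:ℝ) := by
            have h1 : l + k + 1 ≤ n := by omega
            have h2 := (by exact_mod_cast h1 : (l:ℝ) + (k:ℝ) + 1 ≤ (n:ℝ))
            linarith
          have h := term_bound (n:ℝ) (l:ℝ) hl2 hlr
          simp only [Gf]
          push_cast
          exact h
      _ = Gf (n:ℝ) (b+1) - Gf (n:ℝ) a := tele_aux _ _ _ (by omega)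
      _ ≤ 1 / ((n : ℝ) ^ 2 * (k : ℝ)) + 2 * Real.log ((n : ℝ) / (k : ℝ)) / (n : ℝ) ^ 3 := by
          simp only [Gf]
          push_cast
          rw [hbR]
          have hNK1 : (k:ℝ) ≤ (n:ℝ) - (k:ℝ) - 1 := by
            have h1 : 2*k + 1 ≤ n := by omega
            have h2 := (by exact_mod_cast h1 : 2*(k:ℝ) + 1 ≤ (n:ℝ))
            linarith
          rw [show (n:ℝ) - ((n:ℝ) - (k:ℝ) - 1 + 1) = (k:ℝ) from by ring,
            show (n:ℝ) - (k:ℝ) - 1 + 1 - 1 = (n:ℝ) - (k:ℝ) - 1 from by ring]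
          have hlogdiv : Real.log ((n:ℝ)/(k:ℝ)) = Real.log (n:ℝ) - Real.log (k:ℝ) :=
            Real.log_div (ne_of_gt hN0) (ne_of_gt hK0)
          have h2A : (n:ℝ) ≤ 2*(a:ℝ) := by exact_mod_cast (by omega : n ≤ 2*a)
          have hprod : ((n:ℝ) - (k:ℝ) - 1)*((n:ℝ) - (a:ℝ)) ≤ (n:ℝ)*((a:ℝ) - 1) := by
            nlinarith [mul_nonneg (by linarith : (0:ℝ) ≤ (n:ℝ) - 2)
                (by linarith : (0:ℝ) ≤ 2*(a:ℝ) - (n:ℝ)),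
              mul_nonneg (by linarith : (0:ℝ) ≤ (k:ℝ) - 1)
                (by linarith : (0:ℝ) ≤ (n:ℝ) - (a:ℝ))]
          have hLL : Real.log ((n:ℝ) - (k:ℝ) - 1) + Real.log ((n:ℝ) - (a:ℝ)) ≤
              Real.log (n:ℝ) + Real.log ((a:ℝ) - 1) := by
            rw [← Real.log_mul (ne_of_gt (by linarith : (0:ℝ) < (n:ℝ) - (k:ℝ) - 1))
                (ne_of_gt (by linarith : (0:ℝ) < (n:ℝ) - (a:ℝ))),
              ← Real.log_mul (ne_of_gt hN0) (ne_of_gt (by linarith : (0:ℝ) < (a:ℝ) - 1))]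
            exact Real.log_le_log (by nlinarith) hprod
          have hP : 1/((a:ℝ) - 1) - 1/((n:ℝ) - (a:ℝ)) ≤ 1/((n:ℝ) - (k:ℝ) - 1) := by
            rcases Nat.even_or_odd n with ⟨m, hm⟩ | ⟨m, hm⟩
            · have ham : a = m := by omega
              have hm2 : 2 ≤ m := by omega
              have hM : (2:ℝ) ≤ (m:ℝ) := by exact_mod_cast hm2
              have hNm : (n:ℝ) = 2*(m:ℝ) := by exact_mod_cast (by omega : n = 2*m)
              have hAm : (a:ℝ) = (m:ℝ) := by exact_mod_cast ham
              rw [hAm]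
              have h1 : (0:ℝ) < (m:ℝ) - 1 := by linarith
              have h0 : (0:ℝ) < (m:ℝ) := by linarith
              have he : 1/((m:ℝ) - 1) - 1/((n:ℝ) - (m:ℝ)) = 1/((m:ℝ)*((m:ℝ)-1)) := by
                rw [hNm, show 2*(m:ℝ) - m = m from by ring,
                  div_sub_div _ _ (ne_of_gt h1) (ne_of_gt h0)]
                rw [show (1:ℝ)*m - (m-1)*1 = 1 from by ring,
                  show ((m:ℝ)-1)*m = m*(m-1) from by ring]
              rw [he]
              apply one_div_le_one_div_of_le
              · linarith
              · nlinarith [mul_nonneg (by linarith : (0:ℝ) ≤ (m:ℝ)-1)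
                  (by linarith : (0:ℝ) ≤ (m:ℝ)-2)]
            · have ham : a = m + 1 := by omega
              have hAm : (a:ℝ) = (m:ℝ) + 1 := by exact_mod_cast ham
              have hNm : (n:ℝ) = 2*(m:ℝ) + 1 := by exact_mod_cast (by omega : n = 2*m+1)
              have he : 1/((a:ℝ) - 1) - 1/((n:ℝ) - (a:ℝ)) = 0 := by
                rw [hAm, hNm]; ring_nf
              rw [he]
              have hpos : (0:ℝ) < (n:ℝ) - (k:ℝ) - 1 := by linarith
              positivity
          have key : (1/(n:ℝ)^2 * (-(1/((n:ℝ) - (k:ℝ) - 1)) + 1/(k:ℝ)) +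
              2/(n:ℝ)^3 * (Real.log ((n:ℝ) - (k:ℝ) - 1) - Real.log (k:ℝ))) -
              (1/(n:ℝ)^2 * (-(1/((a:ℝ)-1)) + 1/((n:ℝ)-(a:ℝ))) +
              2/(n:ℝ)^3 * (Real.log ((a:ℝ)-1) - Real.log ((n:ℝ)-(a:ℝ)))) ≤
              1/(n:ℝ)^2 * (1/(k:ℝ)) +
              2/(n:ℝ)^3 * (Real.log (n:ℝ) - Real.log (k:ℝ)) := by
            have e : (1/(n:ℝ)^2 * (-(1/((n:ℝ) - (k:ℝ) - 1)) + 1/(k:ℝ)) +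
                2/(n:ℝ)^3 * (Real.log ((n:ℝ) - (k:ℝ) - 1) - Real.log (k:ℝ))) -
                (1/(n:ℝ)^2 * (-(1/((a:ℝ)-1)) + 1/((n:ℝ)-(a:ℝ))) +
                2/(n:ℝ)^3 * (Real.log ((a:ℝ)-1) - Real.log ((n:ℝ)-(a:ℝ)))) =
                1/(n:ℝ)^2 * ((1/(k:ℝ) - 1/((n:ℝ) - (k:ℝ) - 1)) +
                  (1/((a:ℝ)-1) - 1/((n:ℝ)-(a:ℝ)))) +
                2/(n:ℝ)^3 * ((Real.log ((n:ℝ) - (k:ℝ) - 1) - Real.log (k:ℝ)) -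
                  (Real.log ((a:ℝ)-1) - Real.log ((n:ℝ)-(a:ℝ)))) := by ring
            rw [e]
            have c2 : (0:ℝ) ≤ 1/(n:ℝ)^2 := by positivity
            have c3 : (0:ℝ) ≤ 2/(n:ℝ)^3 := by positivity
            exact add_le_add (mul_le_mul_of_nonneg_left (by linarith) c2)
              (mul_le_mul_of_nonneg_left (by linarith) c3)
          have heq : 1/(n:ℝ)^2 * (1/(k:ℝ)) +
              2/(n:ℝ)^3 * (Real.log (n:ℝ) - Real.log (k:ℝ)) =
              1 / ((n : ℝ) ^ 2 * (k : ℝ)) +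
              2 * Real.log ((n : ℝ) / (k : ℝ)) / (n : ℝ) ^ 3 := by
            rw [hlogdiv]; ring
          linarith [key, heq.le, heq.ge]
  · rw [show Finset.Icc a b = ∅ from Finset.Icc_eq_empty (by omega)]
    simp only [Finset.sum_empty]
    have h1 : (0:ℝ) ≤ 1 / ((n : ℝ) ^ 2 * (k : ℝ)) := by positivity
    have h2 : (0:ℝ) ≤ Real.log ((n:ℝ)/(k:ℝ)) :=
      Real.log_nonneg ((one_le_div hK0).mpr hKN)
    have h3 : (0:ℝ) ≤ 2 * Real.log ((n:ℝ)/(k:ℝ)) / (n:ℝ)^3 := by positivity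
    linarith
end

section
/- For all n, k ∈ ℕ with k ≥ 2, s_k(n) ≤ 1/t! < (e/t)^t, where t = ⌊n/(k-1)⌋. -/
open Equiv

open Equiv.Perm Finset

def IsShort (k : ℕ) {α : Type*} (σ : Perm α) : Prop :=
  ∀ x, ∃ m, 0 < m ∧ m < k ∧ (σ ^ m) x = x

theorem isShort_iff {k N : ℕ} (hk : 2 ≤ k) (σ : Perm (Fin N)) :
    (∀ i ∈ σ.cycleType, i < k) ↔ IsShort k σ := by
  classical
  constructor
  · intro h x
    by_cases hx : σ x = x
    · exact ⟨1, one_pos, by omega, by simpa using hx⟩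
    · have hxs : x ∈ σ.support := mem_support.2 hx
      have hmem : σ.cycleOf x ∈ σ.cycleFactorsFinset :=
        cycleOf_mem_cycleFactorsFinset_iff.2 hxs
      have hcard : (σ.cycleOf x).support.card ∈ σ.cycleType := by
        rw [cycleType_def]
        exact Multiset.mem_map.2 ⟨σ.cycleOf x, by simpa using hmem, rfl⟩
      refine ⟨(σ.cycleOf x).support.card, ?_, h _ hcard, ?_⟩
      · have := two_le_of_mem_cycleType hcard
        omega
      · have hc := isCycle_cycleOf (f := σ) hx
        have h2 : (σ.cycleOf x ^ (σ.cycleOf x).support.card) x = x := by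
          rw [← hc.orderOf, pow_orderOf_eq_one]; rfl
        rwa [cycleOf_pow_apply_self] at h2
  · intro h i hi
    rw [cycleType_def] at hi
    obtain ⟨c, hc, rfl⟩ := Multiset.mem_map.1 hi
    rw [← Finset.mem_def] at hc
    have hcyc : c.IsCycle := (mem_cycleFactorsFinset_iff.1 hc).1
    obtain ⟨x, hx⟩ := hcyc.nonempty_support
    have hceq : c = σ.cycleOf x := cycle_is_cycleOf hx hc
    obtain ⟨m, hm0, hmk, hmx⟩ := h x
    have hxc : x ∈ (σ.cycleOf x).support := by rw [← hceq]; exact hx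
    have hdvd : ((σ.cycleOf x).support.card) ∣ m :=
      ((isCycleOn_support_cycleOf σ x).pow_apply_eq hxc).1 hmx
    have : (σ.cycleOf x).support.card ≤ m := Nat.le_of_dvd hm0 hdvd
    simp only [Function.comp_apply, hceq]
    omega


/-- If `σ` has all cycles shorter than `k` then so does the permutation obtained by
deleting the point `0`. -/
theorem isShort_skip {k N : ℕ} {σ : Perm (Fin (N + 1))} (hσ : IsShort k σ)
    {τ : Perm (Fin (N + 1))} (hτ : ∀ z, z ≠ 0 → τ z = σ z ∨ τ z = σ (σ z))
    (hτ0 : τ 0 = 0) {y : Fin (N + 1)} (hy : y ≠ 0) :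
    ∃ m, 0 < m ∧ m < k ∧ (τ ^ m) y = y := by
  classical
  obtain ⟨m0, hm00, hm0k, hm0y⟩ := hσ y
  set O : Finset (Fin (N + 1)) := (range m0).image fun i => (σ ^ i) y with hO
  have hOstep : ∀ z ∈ O, σ z ∈ O := by
    intro z hz
    obtain ⟨i, hi, rfl⟩ := Finset.mem_image.1 hz
    rw [Finset.mem_range] at hi
    rcases lt_or_eq_of_le (Nat.succ_le_of_lt hi) with hi' | hi'
    · exact Finset.mem_image.2 ⟨i + 1, Finset.mem_range.2 hi',
        by rw [pow_succ', Perm.mul_apply]⟩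
    · have : σ ((σ ^ i) y) = y := by
        rw [← Perm.mul_apply, ← pow_succ']
        have h3 : i + 1 = m0 := hi'
        rw [h3, hm0y]
      rw [this]
      exact Finset.mem_image.2 ⟨0, Finset.mem_range.2 hm00, by simp⟩
  have hτne : ∀ z : Fin (N + 1), z ≠ 0 → τ z ≠ 0 := by
    intro z hz h
    exact hz (τ.injective (h.trans hτ0.symm))
  have hiter : ∀ i : ℕ, (τ ^ i) y ∈ O ∧ (τ ^ i) y ≠ 0 := by
    intro i
    induction i with
    | zero => exact ⟨Finset.mem_image.2 ⟨0, Finset.mem_range.2 hm00, by simp⟩, by simpa using hy⟩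
    | succ i ih =>
      have hz := ih.1
      have hz0 := ih.2
      have h1 : (τ ^ (i + 1)) y = τ ((τ ^ i) y) := by rw [pow_succ', Perm.mul_apply]
      rcases hτ _ hz0 with h | h
      · exact ⟨by rw [h1, h]; exact hOstep _ hz, by rw [h1]; exact hτne _ hz0⟩
      · exact ⟨by rw [h1, h]; exact hOstep _ (hOstep _ hz), by rw [h1]; exact hτne _ hz0⟩
  have hcard : O.card < (range k).card := by
    calc O.card ≤ m0 := le_trans Finset.card_image_le (by simp)
    _ < (range k).card := by simpa using hm0k
  obtain ⟨i, hi, j, hj, hij, heq⟩ :=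
    Finset.exists_ne_map_eq_of_card_lt_of_maps_to hcard (fun i _ => (hiter i).1)
  rw [Finset.mem_range] at hi hj
  -- wlog i < j
  rcases Nat.lt_or_ge i j with hlt | hge
  · refine ⟨j - i, by omega, by omega, ?_⟩
    have hcomm : (τ ^ i) ((τ ^ (j - i)) y) = (τ ^ i) y := by
      rw [← Perm.mul_apply, ← pow_add]
      have : i + (j - i) = j := by omega
      rw [this, heq]
    exact (τ ^ i).injective hcomm
  · have hlt : j < i := by omega
    refine ⟨i - j, by omega, by omega, ?_⟩
    have hcomm : (τ ^ j) ((τ ^ (i - j)) y) = (τ ^ j) y := by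
      rw [← Perm.mul_apply, ← pow_add]
      have : j + (i - j) = i := by omega
      rw [this, ← heq]
    exact (τ ^ j).injective hcomm

theorem isShort_decomposeFin {k N : ℕ} {σ : Perm (Fin (N + 1))} (hσ : IsShort k σ) :
    IsShort k (decomposeFin σ).2 := by
  classical
  set p : Fin (N + 1) := (decomposeFin σ).1 with hp
  set e : Perm (Fin N) := (decomposeFin σ).2 with he
  have hsymm : Equiv.Perm.decomposeFin.symm (p, e) = σ := by
    rw [hp, he]; exact decomposeFin.symm_apply_apply σ
  have hp0 : σ 0 = p := by rw [← hsymm]; exact decomposeFin_symm_apply_zero p e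
  set τ : Perm (Fin (N + 1)) := swap 0 p * σ with hτdef
  have hkey : ∀ x : Fin N, (e x).succ = τ x.succ := by
    intro x
    have := Equiv.Perm.decomposeFin_symm_apply_succ e p x
    rw [hsymm] at this
    rw [hτdef, Perm.mul_apply, this, swap_apply_self]
  have hτ0 : τ 0 = 0 := by
    rw [hτdef, Perm.mul_apply, hp0, swap_apply_right]
  have hτstep : ∀ z : Fin (N + 1), z ≠ 0 → τ z = σ z ∨ τ z = σ (σ z) := by
    intro z hz
    by_cases hpz : p = 0
    · left; rw [hτdef, Perm.mul_apply, hpz, swap_self]; rfl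
    by_cases h1 : σ z = 0
    · right
      have h2 : σ (σ z) = p := by rw [h1, hp0]
      rw [hτdef, Perm.mul_apply, h1, swap_apply_left, hp0]
    · left
      rw [hτdef, Perm.mul_apply, swap_apply_of_ne_of_ne h1]
      intro h
      exact hz (σ.injective (by rw [h, hp0]))
  intro x
  obtain ⟨m, hm0, hmk, hmy⟩ := isShort_skip hσ hτstep hτ0 (Fin.succ_ne_zero x)
  refine ⟨m, hm0, hmk, ?_⟩
  have hpow : ∀ i : ℕ, ((e ^ i) x).succ = (τ ^ i) x.succ := by
    intro i
    induction i with
    | zero => simp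
    | succ i ih => rw [pow_succ', pow_succ', Perm.mul_apply, Perm.mul_apply, hkey, ih]
  apply Fin.succ_injective
  rw [hpow, hmy]


section Reindex

variable {N : ℕ}

/-- Relabel the restriction of `σ` to an invariant finset `s` of size `m` as a
permutation of `Fin m` (junk value `1` if the hypotheses fail). -/
noncomputable def reindex (s : Finset (Fin N)) (m : ℕ) (σ : Perm (Fin N)) : Perm (Fin m) :=
  if h : s.card = m ∧ ∀ x, x ∈ s ↔ σ x ∈ s then
    ((s.orderIsoOfFin h.1).toEquiv.symm).permCongr (σ.subtypePerm fun x => (h.2 x).symm)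
  else 1

theorem reindex_spec (s : Finset (Fin N)) (m : ℕ) (σ : Perm (Fin N)) (h1 : s.card = m)
    (h2 : ∀ x, x ∈ s ↔ σ x ∈ s) :
    reindex s m σ = ((s.orderIsoOfFin h1).toEquiv.symm).permCongr
      (σ.subtypePerm fun x => (h2 x).symm) := by
  rw [reindex, dif_pos (⟨h1, h2⟩ : s.card = m ∧ ∀ x, x ∈ s ↔ σ x ∈ s)]

theorem permCongr_pow {α β : Type*} (g : α ≃ β) (p : Perm α) (i : ℕ) :
    (g.permCongr p) ^ i = g.permCongr (p ^ i) := by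
  induction i with
  | zero => ext x; simp
  | succ i ih =>
    ext x
    rw [pow_succ, pow_succ]
    simp only [Perm.mul_apply, ih, permCongr_apply, symm_apply_apply]

theorem isShort_reindex {k : ℕ} (s : Finset (Fin N)) (m : ℕ) (σ : Perm (Fin N))
    (h1 : s.card = m) (h2 : ∀ x, x ∈ s ↔ σ x ∈ s) (hσ : IsShort k σ) :
    IsShort k (reindex s m σ) := by
  rw [reindex_spec s m σ h1 h2]
  intro x
  set g := (s.orderIsoOfFin h1).toEquiv with hg
  obtain ⟨mm, hm0, hmk, hfix⟩ := hσ (g x).1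
  refine ⟨mm, hm0, hmk, ?_⟩
  rw [permCongr_pow, permCongr_apply, subtypePerm_pow, subtypePerm_apply]
  simp only [symm_symm]
  refine Eq.trans (congrArg g.symm (Subtype.ext ?_)) (g.symm_apply_apply x)
  exact hfix

theorem reindex_injOn {s : Finset (Fin N)} {m : ℕ} {σ σ' : Perm (Fin N)} (h1 : s.card = m)
    (h2 : ∀ x, x ∈ s ↔ σ x ∈ s) (h2' : ∀ x, x ∈ s ↔ σ' x ∈ s)
    (heq : reindex s m σ = reindex s m σ') : ∀ x ∈ s, σ x = σ' x := by
  intro x hx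
  rw [reindex_spec s m σ h1 h2, reindex_spec s m σ' h1 h2'] at heq
  have h3 := Equiv.ext_iff.1 heq ((s.orderIsoOfFin h1).toEquiv.symm ⟨x, hx⟩)
  simp only [permCongr_apply, subtypePerm_apply, symm_symm, apply_symm_apply] at h3
  have h4 := (s.orderIsoOfFin h1).toEquiv.symm.injective h3
  exact congrArg Subtype.val h4

end Reindex

section Len

variable {k N j : ℕ} [NeZero N]

/-- Length of the cycle of `0`. -/
noncomputable def len (σ : Perm (Fin N)) : ℕ :=
  sInf {m | 0 < m ∧ (σ ^ m) 0 = 0}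

theorem len_nonempty {σ : Perm (Fin N)} (hσ : IsShort k σ) :
    {m | 0 < m ∧ (σ ^ m) 0 = 0}.Nonempty := by
  obtain ⟨m, hm0, _, hfix⟩ := hσ 0
  exact ⟨m, hm0, hfix⟩

theorem len_pos {σ : Perm (Fin N)} (hσ : IsShort k σ) : 0 < len σ :=
  (Nat.sInf_mem (len_nonempty hσ)).1

theorem len_fix {σ : Perm (Fin N)} (hσ : IsShort k σ) : (σ ^ len σ) 0 = 0 :=
  (Nat.sInf_mem (len_nonempty hσ)).2

theorem len_min {σ : Perm (Fin N)} {m : ℕ} (hm0 : 0 < m) (hm : m < len σ) :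
    (σ ^ m) 0 ≠ 0 := by
  intro h
  exact Nat.notMem_of_lt_sInf hm ⟨hm0, h⟩

theorem len_le {σ : Perm (Fin N)} (hσ : IsShort k σ) : len σ ≤ k - 1 := by
  obtain ⟨m, hm0, hmk, hfix⟩ := hσ 0
  have := Nat.sInf_le (show m ∈ {m | 0 < m ∧ (σ ^ m) 0 = 0} from ⟨hm0, hfix⟩)
  unfold len
  omega

/-- Distinctness of the points on the cycle of `0`. -/
theorem pow_zero_ne {σ : Perm (Fin N)} {a b : ℕ} (hab : a < b) (hb : b ≤ len σ)
    (hb' : 0 < a ∨ b < len σ) : (σ ^ a) 0 ≠ (σ ^ b) 0 := by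
  intro h
  have hfix : (σ ^ (b - a)) 0 = 0 := by
    apply (σ ^ a).injective
    rw [← Perm.mul_apply, ← pow_add]
    have hba : a + (b - a) = b := by omega
    rw [hba, ← h]
  rcases Nat.lt_or_ge (b - a) (len σ) with hlt | hge
  · exact len_min (by omega) hlt hfix
  · -- b - a = len σ forces a = 0 and b = len σ, contradicting hb'
    have : b - a = len σ := by omega
    omega

/-- The cycle of `0` as a finset. -/
def cyc (j : ℕ) (σ : Perm (Fin N)) : Finset (Fin N) :=
  (range j).image fun i => (σ ^ i) 0

theorem mem_cyc {j : ℕ} {σ : Perm (Fin N)} {x : Fin N} :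
    x ∈ cyc j σ ↔ ∃ i < j, (σ ^ i) 0 = x := by
  simp [cyc]

theorem cyc_card {σ : Perm (Fin N)} (hσ : IsShort k σ) : (cyc (len σ) σ).card = len σ := by
  rw [cyc, Finset.card_image_of_injOn, Finset.card_range]
  intro a ha b hb hab
  simp only [Finset.coe_range, Set.mem_Iio] at ha hb
  by_contra hne
  rcases Nat.lt_or_ge a b with h | h
  · exact pow_zero_ne h (le_of_lt hb) (Or.inr hb) hab
  · exact pow_zero_ne (by omega) (le_of_lt ha) (Or.inr ha) hab.symm

theorem cyc_iff {σ : Perm (Fin N)} (hσ : IsShort k σ) (x : Fin N) :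
    x ∈ cyc (len σ) σ ↔ σ x ∈ cyc (len σ) σ := by
  constructor
  · rintro hx
    obtain ⟨i, hi, rfl⟩ := mem_cyc.1 hx
    rcases Nat.lt_or_ge (i + 1) (len σ) with h | h
    · exact mem_cyc.2 ⟨i + 1, h, by rw [pow_succ', Perm.mul_apply]⟩
    · have hieq : i + 1 = len σ := by omega
      have : σ ((σ ^ i) 0) = 0 := by
        rw [← Perm.mul_apply, ← pow_succ', hieq, len_fix hσ]
      rw [this]
      exact mem_cyc.2 ⟨0, len_pos hσ, rfl⟩
  · intro hx
    obtain ⟨i, hi, hieq⟩ := mem_cyc.1 hx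
    rcases Nat.eq_zero_or_pos i with rfl | hi0
    · have h0 : σ x = 0 := by simpa using hieq.symm
      have h1 : len σ - 1 + 1 = len σ := by have := len_pos hσ; omega
      have h2 : σ ((σ ^ (len σ - 1)) 0) = 0 := by
        rw [← Perm.mul_apply, ← pow_succ', h1, len_fix hσ]
      have hx' := σ.injective (h2.trans h0.symm)
      exact mem_cyc.2 ⟨len σ - 1, by have := len_pos hσ; omega, hx'⟩
    · have h1 : i - 1 + 1 = i := by omega
      have h2 : σ ((σ ^ (i - 1)) 0) = σ x := by
        rw [← Perm.mul_apply, ← pow_succ', h1, hieq]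
      have hx' := σ.injective h2
      exact mem_cyc.2 ⟨i - 1, by omega, hx'⟩

theorem cyc_compl_iff {σ : Perm (Fin N)} (hσ : IsShort k σ) (x : Fin N) :
    x ∈ (cyc (len σ) σ)ᶜ ↔ σ x ∈ (cyc (len σ) σ)ᶜ := by
  rw [Finset.mem_compl, Finset.mem_compl]
  exact not_congr (cyc_iff hσ x)

theorem cyc_compl_card {σ : Perm (Fin N)} (hσ : IsShort k σ) :
    ((cyc (len σ) σ)ᶜ).card = N - len σ := by
  rw [Finset.card_compl, cyc_card hσ, Fintype.card_fin]

end Len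

section Step

variable {k N j : ℕ}

/-- The data extracted from a short permutation whose cycle of `0` has length `j`:
the rest of the cycle of `0` as a tuple of distinct nonzero points, together with the
relabelled restriction to the complement of the cycle of `0`. -/
noncomputable def stepMap (k j : ℕ) {N : ℕ} [NeZero N]
    (σs : {σ : Perm (Fin N) // IsShort k σ ∧ len σ = j}) :
    (Fin (j - 1) ↪ {y : Fin N // y ≠ 0}) × {e : Perm (Fin (N - j)) // IsShort k e} :=
  ⟨⟨fun i => ⟨(σs.1 ^ (i.1 + 1)) 0, by
      have hlen := σs.2.2
      have hi := i.2
      exact len_min (by omega) (by omega) ⟩,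
    by
      intro i1 i2 h
      have hlen := σs.2.2
      have h2 := congrArg Subtype.val h
      have hi1 := i1.2
      have hi2 := i2.2
      by_contra hne
      have hne' : i1.1 ≠ i2.1 := fun hh => hne (Fin.ext hh)
      rcases Nat.lt_or_ge i1.1 i2.1 with hlt | hge
      · exact pow_zero_ne (a := i1.1 + 1) (b := i2.1 + 1) (by omega) (by omega)
          (Or.inl (by omega)) h2
      · exact pow_zero_ne (a := i2.1 + 1) (b := i1.1 + 1) (by omega) (by omega)
          (Or.inl (by omega)) h2.symm⟩,
   ⟨reindex ((cyc j σs.1)ᶜ) (N - j) σs.1, by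
      have hσ := σs.2.1
      have key : ∀ jj, len σs.1 = jj → IsShort k (reindex ((cyc jj σs.1)ᶜ) (N - jj) σs.1) := by
        intro jj hjj
        subst hjj
        exact isShort_reindex _ _ _ (cyc_compl_card hσ) (cyc_compl_iff hσ) hσ
      exact key j σs.2.2⟩⟩

theorem stepMap_injective {k j N : ℕ} [NeZero N] :
    Function.Injective (stepMap k j (N := N)) := by
  rintro ⟨σ, hσ, hlen⟩ ⟨σ', hσ', hlen'⟩ heq
  have hv := congrArg Prod.fst heq
  have he := congrArg (fun z => (z.2 : Perm (Fin (N - j)))) heq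
  simp only [stepMap] at hv he
  have hfixσ : (σ ^ j) 0 = 0 := by rw [← hlen]; exact len_fix hσ
  have hfixσ' : (σ' ^ j) 0 = 0 := by rw [← hlen']; exact len_fix hσ'
  have hit : ∀ i, i < j → (σ ^ i) 0 = (σ' ^ i) 0 := by
    intro i hi
    match i, hi with
    | 0, _ => simp
    | (m + 1), hi =>
      have h1 : m < j - 1 := by omega
      have h2 := DFunLike.congr_fun hv (⟨m, h1⟩ : Fin (j - 1))
      exact congrArg Subtype.val h2
  have hC : cyc j σ = cyc j σ' := by
    unfold cyc
    apply Finset.image_congr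
    intro i hi
    simp only [Finset.coe_range, Set.mem_Iio] at hi
    exact hit i hi
  rw [← hC] at he
  apply Subtype.ext
  apply Equiv.ext
  intro x
  by_cases hx : x ∈ cyc j σ
  · obtain ⟨i, hij, hxi⟩ := mem_cyc.1 hx
    have hxi' : (σ' ^ i) 0 = x := (hit i hij).symm.trans hxi
    have e1 : σ x = (σ ^ (i + 1)) 0 := by rw [← hxi, pow_succ', Perm.mul_apply]
    have e2 : σ' x = (σ' ^ (i + 1)) 0 := by rw [← hxi', pow_succ', Perm.mul_apply]
    rcases Nat.lt_or_ge (i + 1) j with hlt | hge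
    · rw [e1, e2]; exact hit (i + 1) hlt
    · have hij' : i + 1 = j := by omega
      rw [e1, e2, hij', hfixσ, hfixσ']
  · have hx2 : x ∈ (cyc j σ)ᶜ := Finset.mem_compl.2 hx
    have h1 : ((cyc j σ)ᶜ).card = N - j := by rw [← hlen]; exact cyc_compl_card hσ
    have h2 : ∀ y, y ∈ (cyc j σ)ᶜ ↔ σ y ∈ (cyc j σ)ᶜ := by
      rw [← hlen]; exact cyc_compl_iff hσ
    have h2' : ∀ y, y ∈ (cyc j σ)ᶜ ↔ σ' y ∈ (cyc j σ)ᶜ := by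
      rw [hC, ← hlen']; exact cyc_compl_iff hσ'
    exact reindex_injOn h1 h2 h2' he x hx2

theorem card_isShort_le_sum {k N : ℕ} (hk : 2 ≤ k) (hN : k - 1 ≤ N) :
    Nat.card {σ : Perm (Fin N) // IsShort k σ} ≤
      ∑ j ∈ Icc 1 (k - 1), (N - 1).descFactorial (j - 1) *
        Nat.card {e : Perm (Fin (N - j)) // IsShort k e} := by
  classical
  haveI : NeZero N := ⟨by omega⟩
  rw [Nat.card_eq_fintype_card, Fintype.card_subtype]
  rw [Finset.card_eq_sum_card_fiberwise (f := len) (t := Icc 1 (k - 1))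
    (fun σ hσ => by
      rw [Finset.mem_coe, Finset.mem_filter] at hσ
      rw [Finset.mem_coe, Finset.mem_Icc]
      exact ⟨len_pos hσ.2, len_le hσ.2⟩)]
  apply Finset.sum_le_sum
  intro j hj
  rw [Finset.filter_filter]
  have hcard : (univ.filter fun σ : Perm (Fin N) => IsShort k σ ∧ len σ = j).card
      = Fintype.card {σ : Perm (Fin N) // IsShort k σ ∧ len σ = j} :=
    (Fintype.card_subtype _).symm
  rw [hcard]
  have hle := Fintype.card_le_of_injective _ (stepMap_injective (k := k) (j := j) (N := N))
  apply le_trans hle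
  rw [Fintype.card_prod, Fintype.card_embedding_eq, Fintype.card_fin]
  have hne : Fintype.card {y : Fin N // y ≠ 0} = N - 1 := by simp
  rw [hne, Nat.card_eq_fintype_card]

end Step


-- real chunk 4 begins here
theorem s_eq {k n : ℕ} (hk : 2 ≤ k) :
    s k n = (Nat.card {σ : Perm (Fin n) // IsShort k σ} : ℝ) / (Nat.factorial n : ℝ) := by
  rw [s, Nat.card_congr (Equiv.subtypeEquivRight fun σ => isShort_iff hk σ)]

theorem s_nonneg (k n : ℕ) : 0 ≤ s k n := by
  rw [s]
  positivity

theorem card_isShort_le (k n : ℕ) :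
    Nat.card {σ : Perm (Fin n) // IsShort k σ} ≤ n.factorial := by
  classical
  calc Nat.card {σ : Perm (Fin n) // IsShort k σ} ≤ Nat.card (Perm (Fin n)) := by
        rw [Nat.card_eq_fintype_card, Nat.card_eq_fintype_card]
        exact Fintype.card_subtype_le _
  _ = n.factorial := by rw [Nat.card_eq_fintype_card, Fintype.card_perm, Fintype.card_fin]

theorem s_le_one {k n : ℕ} (hk : 2 ≤ k) : s k n ≤ 1 := by
  rw [s_eq hk]
  rw [div_le_one (by positivity)]
  exact_mod_cast card_isShort_le k n

theorem card_isShort_succ_le (k N : ℕ) :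
    Nat.card {σ : Perm (Fin (N + 1)) // IsShort k σ} ≤
      (N + 1) * Nat.card {e : Perm (Fin N) // IsShort k e} := by
  classical
  have hinj : Function.Injective
      (fun σs : {σ : Perm (Fin (N + 1)) // IsShort k σ} =>
        ((decomposeFin σs.1).1, (⟨(decomposeFin σs.1).2, isShort_decomposeFin σs.2⟩ :
          {e : Perm (Fin N) // IsShort k e}))) := by
    intro σs σs' h
    have h1 := congrArg Prod.fst h
    have h2 := congrArg (fun z => (z.2 : Perm (Fin N))) h
    simp only at h1 h2
    apply Subtype.ext
    apply decomposeFin.injective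
    exact Prod.ext h1 h2
  have := Nat.card_le_card_of_injective _ hinj
  rwa [Nat.card_prod, Nat.card_eq_fintype_card (α := Fin (N + 1)), Fintype.card_fin] at this

theorem s_succ_le {k N : ℕ} (hk : 2 ≤ k) : s k (N + 1) ≤ s k N := by
  rw [s_eq hk, s_eq hk]
  rw [div_le_div_iff₀ (by positivity) (by positivity)]
  have h1 := card_isShort_succ_le k N
  have h2 : ((N + 1).factorial : ℝ) = (N + 1) * N.factorial := by
    rw [Nat.factorial_succ]; push_cast; ring
  rw [h2]
  calc (Nat.card {σ : Perm (Fin (N + 1)) // IsShort k σ} : ℝ) * (N.factorial : ℝ)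
      ≤ ((N + 1) * Nat.card {e : Perm (Fin N) // IsShort k e} : ℝ) * (N.factorial : ℝ) := by
        apply mul_le_mul_of_nonneg_right _ (by positivity)
        exact_mod_cast h1
    _ = (Nat.card {e : Perm (Fin N) // IsShort k e} : ℝ) * ((N + 1) * N.factorial) := by ring

theorem s_mono {k : ℕ} (hk : 2 ≤ k) {m n : ℕ} (hmn : m ≤ n) : s k n ≤ s k m := by
  induction n, hmn using Nat.le_induction with
  | base => exact le_refl _
  | succ n hn ih => exact le_trans (s_succ_le hk) ih

theorem s_step {k N : ℕ} (hk : 2 ≤ k) (hN : k - 1 ≤ N) :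
    s k N ≤ (((k - 1 : ℕ) : ℝ) / N) * s k (N - (k - 1)) := by
  have hN0 : 0 < N := by omega
  have hsum := card_isShort_le_sum hk hN
  have hterm : ∀ j ∈ Icc 1 (k - 1),
      ((N - 1).descFactorial (j - 1) * Nat.card {e : Perm (Fin (N - j)) // IsShort k e} : ℝ)
        ≤ ((N - 1).factorial : ℝ) * s k (N - (k - 1)) := by
    intro j hj
    rw [Finset.mem_Icc] at hj
    have hj1 : 1 ≤ j := hj.1
    have hjN : j ≤ N := le_trans hj.2 hN
    have hdf : ((N - 1).descFactorial (j - 1) : ℝ) * ((N - j).factorial : ℝ)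
        = ((N - 1).factorial : ℝ) := by
      have h1 := Nat.factorial_mul_descFactorial (show j - 1 ≤ N - 1 by omega)
      have h2 : N - 1 - (j - 1) = N - j := by omega
      rw [h2] at h1
      exact_mod_cast (mul_comm ((N - j).factorial) _ ▸ h1)
    have hdf' : ((N - 1).descFactorial (j - 1) : ℝ)
        = ((N - 1).factorial : ℝ) / ((N - j).factorial : ℝ) := by
      rw [eq_div_iff (by positivity)]
      exact hdf
    have hs : s k (N - j) = (Nat.card {e : Perm (Fin (N - j)) // IsShort k e} : ℝ)
        / ((N - j).factorial : ℝ) := s_eq hk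
    calc ((N - 1).descFactorial (j - 1) * Nat.card {e : Perm (Fin (N - j)) // IsShort k e} : ℝ)
        = ((N - 1).factorial : ℝ) * s k (N - j) := by
          rw [hs, hdf']
          ring
      _ ≤ ((N - 1).factorial : ℝ) * s k (N - (k - 1)) := by
          apply mul_le_mul_of_nonneg_left _ (by positivity)
          exact s_mono hk (by omega)
  have hchain : (Nat.card {σ : Perm (Fin N) // IsShort k σ} : ℝ)
      ≤ ((k - 1 : ℕ) : ℝ) * (((N - 1).factorial : ℝ) * s k (N - (k - 1))) := by
    calc (Nat.card {σ : Perm (Fin N) // IsShort k σ} : ℝ)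
        ≤ ((∑ j ∈ Icc 1 (k - 1), (N - 1).descFactorial (j - 1) *
            Nat.card {e : Perm (Fin (N - j)) // IsShort k e} : ℕ) : ℝ) := by
          exact_mod_cast hsum
      _ = ∑ j ∈ Icc 1 (k - 1), ((N - 1).descFactorial (j - 1) *
            Nat.card {e : Perm (Fin (N - j)) // IsShort k e} : ℝ) := by
          push_cast
          rfl
      _ ≤ ∑ _j ∈ Icc 1 (k - 1), ((N - 1).factorial : ℝ) * s k (N - (k - 1)) :=
          Finset.sum_le_sum hterm
      _ = ((k - 1 : ℕ) : ℝ) * (((N - 1).factorial : ℝ) * s k (N - (k - 1))) := by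
          rw [Finset.sum_const, Nat.card_Icc]
          simp [nsmul_eq_mul]
  have hNfac : (N.factorial : ℝ) = (N : ℝ) * ((N - 1).factorial : ℝ) := by
    exact_mod_cast (Nat.mul_factorial_pred (by omega : N ≠ 0)).symm
  rw [s_eq hk, div_le_iff₀ (by positivity)]
  apply le_trans hchain
  rw [hNfac]
  have hNne : (N : ℝ) ≠ 0 := by positivity
  apply le_of_eq
  field_simp

theorem s_le_inv_factorial {k : ℕ} (hk : 2 ≤ k) :
    ∀ t N : ℕ, N / (k - 1) = t → s k N ≤ 1 / ((t.factorial : ℕ) : ℝ) := by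
  intro t
  induction t with
  | zero =>
    intro N _
    simpa using s_le_one (n := N) hk
  | succ t ih =>
    intro N h
    have hk1 : 0 < k - 1 := by omega
    have hN : k - 1 ≤ N := by
      by_contra hc
      rw [Nat.div_eq_of_lt (by omega)] at h
      omega
    have hsub : (N - (k - 1)) / (k - 1) = t := by
      have := Nat.div_eq_sub_div hk1 hN
      omega
    have h2 := ih _ hsub
    have hNt : (t + 1) * (k - 1) ≤ N := by
      have := (Nat.le_div_iff_mul_le hk1).1 (le_of_eq h.symm)
      omega
    have hN0 : 0 < N := by omega
    have hfrac : ((k - 1 : ℕ) : ℝ) / N ≤ 1 / ((t : ℝ) + 1) := by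
      rw [div_le_div_iff₀ (by positivity) (by positivity)]
      have hc : ((k - 1) * (t + 1) : ℕ) ≤ N := by
        calc ((k - 1) * (t + 1) : ℕ) = (t + 1) * (k - 1) := by ring
        _ ≤ N := hNt
      calc ((k - 1 : ℕ) : ℝ) * ((t : ℝ) + 1) = (((k - 1) * (t + 1) : ℕ) : ℝ) := by
            push_cast; ring
        _ ≤ N := by exact_mod_cast hc
        _ = 1 * N := (one_mul _).symm
    calc s k N ≤ (((k - 1 : ℕ) : ℝ) / N) * s k (N - (k - 1)) := s_step hk hN
      _ ≤ (1 / ((t : ℝ) + 1)) * (1 / ((t.factorial : ℕ) : ℝ)) :=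
          mul_le_mul hfrac h2 (s_nonneg _ _) (by positivity)
      _ = 1 / (((t + 1).factorial : ℕ) : ℝ) := by
          rw [div_mul_div_comm, one_mul, Nat.factorial_succ]
          push_cast
          ring_nf

theorem inv_factorial_lt_pow {t : ℕ} (ht : 1 ≤ t) :
    (1 : ℝ) / (t.factorial : ℝ) < (Real.exp 1 / (t : ℝ)) ^ t := by
  have ht0 : (0 : ℝ) < t := by exact_mod_cast ht
  have hsum : 1 + ((t : ℝ)) ^ t / (t.factorial : ℝ) ≤ Real.exp t := by
    have h1 := Real.sum_le_exp_of_nonneg (le_of_lt ht0) (t + 1)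
    have h2 : ({0, t} : Finset ℕ) ⊆ range (t + 1) := by
      intro i hi
      simp only [Finset.mem_insert, Finset.mem_singleton] at hi
      rw [Finset.mem_range]
      omega
    have h3 : ∑ i ∈ ({0, t} : Finset ℕ), (t : ℝ) ^ i / (i.factorial : ℝ)
        ≤ ∑ i ∈ range (t + 1), (t : ℝ) ^ i / (i.factorial : ℝ) :=
      Finset.sum_le_sum_of_subset_of_nonneg h2 (fun i _ _ => by positivity)
    have h4 : ∑ i ∈ ({0, t} : Finset ℕ), (t : ℝ) ^ i / (i.factorial : ℝ)
        = 1 + (t : ℝ) ^ t / (t.factorial : ℝ) := by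
      rw [Finset.sum_pair (by omega : (0 : ℕ) ≠ t)]
      simp
    linarith
  have hlt : ((t : ℝ)) ^ t / (t.factorial : ℝ) < Real.exp t := by linarith
  rw [div_pow, Real.exp_one_pow, div_lt_div_iff₀ (by positivity) (by positivity), one_mul]
  calc ((t : ℝ)) ^ t = ((t : ℝ) ^ t / (t.factorial : ℝ)) * (t.factorial : ℝ) := by
        field_simp
    _ < Real.exp t * (t.factorial : ℝ) := mul_lt_mul_of_pos_right hlt (by positivity)


/-- For k ≥ 2, s_k(n) ≤ 1/t! < (e/t)^t, where t = ⌊n/(k-1)⌋ (assumed ≥ 1). -/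
theorem s_k_bound (n k : ℕ) (hk : 2 ≤ k) (ht : 1 ≤ n / (k - 1)) :
    s k n ≤ 1 / (Nat.factorial (n / (k - 1)) : ℝ) ∧
    (1 : ℝ) / (Nat.factorial (n / (k - 1)) : ℝ) <
      (Real.exp 1 / ((n / (k - 1) : ℕ) : ℝ)) ^ (n / (k - 1)) := by
  exact ⟨s_le_inv_factorial hk (n / (k - 1)) n rfl, inv_factorial_lt_pow ht⟩
end

section
/- The generating function identity 1 + Σ_{n≥1} Q(S_n) x^n = Π_{d odd} (1 + x^d/d^2) holds as an identity of formal power series; equivalently, Q(S_n) = Σ_S Π_{s∈S} 1/s^2, where the sum is over all sets S of pairwise distinct odd positive integers with Σ_{s∈S} s = n. -/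
open Equiv

section AuxForQ

open Equiv Equiv.Perm Finset

namespace QAux

variable {α : Type*} [Fintype α] [DecidableEq α]

lemma commute_zpow_apply_eq {σ g : Perm α} (h : Commute g σ) (i : ℤ) (x : α) :
    g ((σ ^ i) x) = (σ ^ i) (g x) := by
  have h' : Commute g (σ ^ i) := h.zpow_right i
  calc g ((σ ^ i) x) = (g * σ ^ i) x := rfl
    _ = (σ ^ i * g) x := by rw [h'.eq]
    _ = (σ ^ i) (g x) := rfl

lemma commute_apply_eq {σ g : Perm α} (h : Commute g σ) (x : α) :
    g (σ x) = σ (g x) := by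
  simpa using commute_zpow_apply_eq h 1 x

lemma commute_apply_mem_support {σ g : Perm α} (h : Commute g σ) {x : α}
    (hx : x ∈ σ.support) : g x ∈ σ.support := by
  rw [Perm.mem_support] at hx ⊢
  intro hc
  have h1 : g (σ x) = σ (g x) := commute_apply_eq h x
  rw [hc] at h1
  exact hx (g.injective h1)

lemma mul_conj_eq {σ g : Perm α} (h : Commute g σ) : g * σ * g⁻¹ = σ := by
  rw [h.eq]; group

lemma cycleOf_commute_conj {σ g : Perm α} (h : Commute g σ) (x : α) :
    σ.cycleOf (g x) = g * σ.cycleOf x * g⁻¹ := by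
  ext y
  have hsc : σ.SameCycle (g x) y ↔ σ.SameCycle x (g⁻¹ y) := by
    constructor
    · rintro ⟨i, hi⟩
      exact ⟨i, by rw [← hi, ← commute_zpow_apply_eq h i x]; simp⟩
    · rintro ⟨i, hi⟩
      exact ⟨i, by rw [← commute_zpow_apply_eq h i x, hi]; simp⟩
  simp only [Perm.mul_apply, Perm.cycleOf_apply]
  by_cases hy : σ.SameCycle (g x) y
  · rw [if_pos hy, if_pos (hsc.mp hy)]
    have := commute_apply_eq h (g⁻¹ y)
    rw [this]; simp
  · rw [if_neg hy, if_neg (fun hco => hy (hsc.mpr hco))]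
    simp

end QAux

namespace QAux2
open QAux

variable {α : Type*} [Fintype α] [DecidableEq α]

lemma noncommProd_apply_eq_self {ι : Type*} (s : Finset ι) (f : ι → Perm α) (comm) (x : α)
    (h : ∀ c ∈ s, f c x = x) : s.noncommProd f comm x = x := by
  refine Finset.noncommProd_induction s f comm (fun g : Perm α => g x = x) ?_ rfl h
  intro a b ha hb
  simp [Perm.mul_apply, hb, ha]

lemma card_commute_eq (σ : Perm α) (h1 : σ.cycleType.Nodup)
    (h2 : Fintype.card α - σ.cycleType.sum ≤ 1) :
    Nat.card {g : Perm α // Commute g σ} = σ.cycleType.prod := by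
  classical
  set ι := {c : Perm α // c ∈ σ.cycleFactorsFinset} with hι
  have hcyc : ∀ c : ι, (c : Perm α).IsCycle := fun c =>
    (Perm.mem_cycleFactorsFinset_iff.mp c.2).1
  have hne : ∀ c : ι, ∃ x, x ∈ (c : Perm α).support := fun c => (hcyc c).nonempty_support
  -- chosen base point in each cycle
  set a : ι → α := fun c => (hne c).choose with ha_def
  have ha : ∀ c : ι, a c ∈ (c : Perm α).support := fun c => (hne c).choose_spec
  have haσ : ∀ c : ι, a c ∈ σ.support := fun c =>
    Perm.mem_cycleFactorsFinset_support_le c.2 (ha c)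
  have hccyc : ∀ c : ι, (c : Perm α) = σ.cycleOf (a c) := fun c =>
    Perm.cycle_is_cycleOf (ha c) c.2
  -- nodup injectivity
  have hinj : ∀ c d : ι, (c : Perm α).support.card = (d : Perm α).support.card → c = d := by
    intro c d hcd
    have h1' := h1
    rw [Perm.cycleType_def] at h1'
    have := Multiset.inj_on_of_nodup_map h1' (c : Perm α) c.2 (d : Perm α) d.2
    exact Subtype.ext (this hcd)
  -- the map
  have hmem : ∀ (g : {g : Perm α // Commute g σ}) (c : ι),
      (g : Perm α) (a c) ∈ (c : Perm α).support := by
    intro g c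
    have hgx : (g : Perm α) (a c) ∈ σ.support := commute_apply_mem_support g.2 (haσ c)
    have hc' : σ.cycleOf ((g : Perm α) (a c)) ∈ σ.cycleFactorsFinset :=
      Perm.cycleOf_mem_cycleFactorsFinset_iff.mpr hgx
    have hcard : (σ.cycleOf ((g : Perm α) (a c))).support.card = (c : Perm α).support.card := by
      rw [cycleOf_commute_conj g.2, hccyc c]
      exact Perm.card_support_conj
    have : (⟨σ.cycleOf ((g : Perm α) (a c)), hc'⟩ : ι) = c := hinj _ _ hcard
    have hmem' : (g : Perm α) (a c) ∈ (σ.cycleOf ((g : Perm α) (a c))).support :=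
      Perm.mem_support_cycleOf_iff.mpr ⟨Perm.SameCycle.refl _ _, hgx⟩
    rwa [show σ.cycleOf ((g : Perm α) (a c)) = (c : Perm α) from congrArg Subtype.val this] at hmem'
  set F : {g : Perm α // Commute g σ} → (∀ c : ι, {x // x ∈ (c : Perm α).support}) :=
    fun g c => ⟨(g : Perm α) (a c), hmem g c⟩ with hF
  have hFbij : Function.Bijective F := by
    constructor
    · rintro ⟨g, hg⟩ ⟨g', hg'⟩ hgg'
      have heq : ∀ c : ι, g (a c) = g' (a c) := fun c =>
        congrArg Subtype.val (congrFun hgg' c)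
      ext x
      by_cases hx : x ∈ σ.support
      · set c : ι := ⟨σ.cycleOf x, Perm.cycleOf_mem_cycleFactorsFinset_iff.mpr hx⟩ with hc
        have hax : σ.SameCycle x (a c) := (Perm.mem_support_cycleOf_iff.mp (ha c)).1
        obtain ⟨i, hi⟩ := hax.symm
        rw [← hi, commute_zpow_apply_eq hg i, commute_zpow_apply_eq hg' i, heq c]
      · -- complement has at most one element
        have hcompl : (σ.supportᶜ : Finset α).card ≤ 1 := by
          rw [Finset.card_compl]
          rwa [Perm.sum_cycleType] at h2
        have hgx : g x ∈ σ.supportᶜ := by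
          rw [Finset.mem_compl]
          intro hmem'
          have := commute_apply_mem_support (hg.inv_left) hmem'
          rw [← Perm.mul_apply, inv_mul_cancel, Perm.one_apply] at this
          exact hx this
        have hg'x : g' x ∈ σ.supportᶜ := by
          rw [Finset.mem_compl]
          intro hmem'
          have := commute_apply_mem_support (hg'.inv_left) hmem'
          rw [← Perm.mul_apply, inv_mul_cancel, Perm.one_apply] at this
          exact hx this
        have hxc : x ∈ σ.supportᶜ := Finset.mem_compl.mpr hx
        have e1 := Finset.card_le_one.mp hcompl _ hgx _ hxc
        have e2 := Finset.card_le_one.mp hcompl _ hg'x _ hxc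
        simp only [Perm.coe_mul]
        rw [e1, e2]
    · intro u
      have hsc : ∀ c : ι, ∃ i : ℤ, ((c : Perm α) ^ i) (a c) = (u c : α) := by
        intro c
        exact (hcyc c).sameCycle (Perm.mem_support.mp (ha c)) (Perm.mem_support.mp (u c).2)
      choose k hk using hsc
      have hdisj : ∀ c d : ι, c ≠ d → (c : Perm α).Disjoint (d : Perm α) := by
        intro c d hcd
        exact σ.cycleFactorsFinset_pairwise_disjoint c.2 d.2 (fun h => hcd (Subtype.ext h))
      have comm : (↑(Finset.univ : Finset ι) : Set ι).Pairwise fun c d =>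
          Commute ((c : Perm α) ^ k c) ((d : Perm α) ^ k d) := by
        intro c _ d _ hcd
        exact ((hdisj c d hcd).commute).zpow_zpow _ _
      set g₀ : Perm α := Finset.univ.noncommProd (fun c : ι => (c : Perm α) ^ k c) comm with hg₀
      have hg₀σ : Commute g₀ σ := by
        refine (Finset.noncommProd_commute _ _ _ _ ?_).symm
        intro c _
        exact ((Perm.self_mem_cycle_factors_commute c.2).symm.zpow_right (k c))
      refine ⟨⟨g₀, hg₀σ⟩, ?_⟩
      funext c
      apply Subtype.ext
      show g₀ (a c) = (u c : α)
      rw [hg₀]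
      have hrw := Finset.mul_noncommProd_erase Finset.univ (Finset.mem_univ c)
        (fun c : ι => (c : Perm α) ^ k c) comm
      rw [← hrw, Perm.mul_apply]
      convert hk c using 2
      exact noncommProd_apply_eq_self (Finset.univ.erase c) (fun c : ι => (c : Perm α) ^ k c) _ (a c)
          (h := fun d hd => by
          have hdc : d ≠ c := (Finset.mem_erase.mp hd).1
          have hfixpt : (d : Perm α) (a c) = a c := by
            rcases (hdisj d c hdc) (a c) with h | h
            · exact h
            · exact absurd h (Perm.mem_support.mp (ha c))
          exact Perm.zpow_apply_eq_self_of_apply_eq_self hfixpt _)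
  rw [Nat.card_congr (Equiv.ofBijective F hFbij), Nat.card_eq_fintype_card, Fintype.card_pi]
  have : ∀ c : ι, Fintype.card {x // x ∈ (c : Perm α).support} = (c : Perm α).support.card :=
    fun c => Fintype.card_coe _
  rw [Finset.prod_congr rfl (fun c _ => this c)]
  rw [Perm.cycleType_def, ← Finset.prod_eq_multiset_prod]
  exact Finset.prod_coe_sort σ.cycleFactorsFinset (fun c => c.support.card)

end QAux2

namespace QAux3
open QAux QAux2

variable {α : Type*} [Fintype α] [DecidableEq α]

lemma card_fiber_mul (σ : Perm α) (h1 : σ.cycleType.Nodup)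
    (h2 : Fintype.card α - σ.cycleType.sum ≤ 1) :
    (Finset.univ.filter fun τ : Perm α => τ.cycleType = σ.cycleType).card * σ.cycleType.prod
      = Nat.factorial (Fintype.card α) := by
  classical
  have horb : MulAction.orbit (ConjAct (Perm α)) σ = {τ : Perm α | τ.cycleType = σ.cycleType} := by
    ext τ
    rw [Set.mem_setOf_eq, ConjAct.mem_orbit_conjAct, ← Perm.isConj_iff_cycleType_eq]
  have hcard_orb : Nat.card (MulAction.orbit (ConjAct (Perm α)) σ)
      = (Finset.univ.filter fun τ : Perm α => τ.cycleType = σ.cycleType).card := by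
    rw [horb]
    rw [Nat.card_eq_fintype_card]
    convert Fintype.card_subtype (fun τ : Perm α => τ.cycleType = σ.cycleType)
    exact Iff.rfl
  have hcard_stab : Nat.card (MulAction.stabilizer (ConjAct (Perm α)) σ)
      = σ.cycleType.prod := by
    rw [← card_commute_eq σ h1 h2]
    apply Nat.card_congr
    refine Equiv.subtypeEquiv ConjAct.ofConjAct.toEquiv (fun g => ?_)
    rw [MulAction.mem_stabilizer_iff, ConjAct.smul_def]
    simp only [MulEquiv.toEquiv_eq_coe, EquivLike.coe_coe]
    constructor
    · intro h
      exact mul_inv_eq_iff_eq_mul.mp h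
    · intro h
      rw [h.eq]
      group
  have := MulAction.card_orbit_mul_card_stabilizer_eq_card_group (ConjAct (Perm α)) σ
  rw [← Nat.card_eq_fintype_card (α := MulAction.orbit (ConjAct (Perm α)) σ),
    ← Nat.card_eq_fintype_card (α := MulAction.stabilizer (ConjAct (Perm α)) σ)] at this
  rw [← hcard_orb, ← hcard_stab, this]
  rw [Fintype.card_congr ConjAct.toConjAct.toEquiv.symm, Fintype.card_perm]

end QAux3

end AuxForQ

/-- Q(Sₙ) = Σ_S Π_{s∈S} 1/s², summing over all finite sets S of pairwise distinct odd
positive integers with Σ_{s∈S} s = n (the coefficient identity for the generating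
function Π_{d odd} (1 + x^d/d²)). -/
theorem Q_eq_sum_over_distinct_odd_sets (n : ℕ) :
    Q n = ∑ S ∈ (Finset.Icc 1 n).powerset.filter
        (fun S => (∀ s ∈ S, Odd s) ∧ S.sum id = n),
      ∏ s ∈ S, 1 / (s : ℝ) ^ 2 := by
  classical
  set F := (Finset.Icc 1 n).powerset.filter
      (fun S => (∀ s ∈ S, Odd s) ∧ S.sum id = n) with hF
  have hmemF : ∀ S ∈ F, S ⊆ Finset.Icc 1 n ∧ (∀ s ∈ S, Odd s) ∧ S.sum id = n := by
    intro S hS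
    simp only [hF, Finset.mem_filter, Finset.mem_powerset] at hS
    exact ⟨hS.1, hS.2.1, hS.2.2⟩
  set m : Finset ℕ → Multiset ℕ := fun S => (S.erase 1).val with hm
  set fib : Finset ℕ → Finset (Perm (Fin n)) :=
    fun S => Finset.univ.filter (fun τ : Perm (Fin n) => τ.cycleType = m S) with hfib
  have hsum_val : ∀ T : Finset ℕ, T.val.sum = T.sum id := by
    intro T; rw [Finset.sum_eq_multiset_sum, Multiset.map_id]
  have hprod_val : ∀ T : Finset ℕ, T.val.prod = T.prod id := by
    intro T; rw [Finset.prod_eq_multiset_prod, Multiset.map_id]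
  have hmsum : ∀ S ∈ F, (m S).sum = if 1 ∈ S then n - 1 else n := by
    intro S hS
    obtain ⟨hsub, hodd, hsum⟩ := hmemF S hS
    rw [hm, hsum_val]
    by_cases h1 : 1 ∈ S
    · rw [if_pos h1]
      have h2 := Finset.sum_erase_add S id h1
      rw [hsum] at h2
      simp only [id_eq] at h2 ⊢
      omega
    · rw [if_neg h1, Finset.erase_eq_of_notMem h1, hsum]
  have hn_of_mem : ∀ S ∈ F, 1 ∈ S → 1 ≤ n := by
    intro S hS h1
    exact (Finset.mem_Icc.mp ((hmemF S hS).1 h1)).2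
  have hprodS : ∀ S : Finset ℕ, (m S).prod = ∏ s ∈ S, s := by
    intro S
    rw [hm, hprod_val]
    exact Finset.prod_erase S rfl
  have hm2 : ∀ S ∈ F, ∀ i ∈ m S, 2 ≤ i := by
    intro S hS i hi
    obtain ⟨hsub, hodd, hsum⟩ := hmemF S hS
    rw [hm, Finset.mem_val] at hi
    have hne1 : i ≠ 1 := (Finset.mem_erase.mp hi).1
    have hiS : i ∈ S := Finset.mem_of_mem_erase hi
    have h1le : 1 ≤ i := (Finset.mem_Icc.mp (hsub hiS)).1
    omega
  have hmodd : ∀ S ∈ F, ∀ i ∈ m S, Odd i := by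
    intro S hS i hi
    rw [hm, Finset.mem_val] at hi
    exact (hmemF S hS).2.1 i (Finset.mem_of_mem_erase hi)
  have hmnodup : ∀ S : Finset ℕ, (m S).Nodup := fun S => (S.erase 1).nodup
  -- the fiber cardinality
  have hfibcard : ∀ S ∈ F, (fib S).card * ∏ s ∈ S, s = Nat.factorial n := by
    intro S hS
    have hsumle : (m S).sum ≤ Fintype.card (Fin n) := by
      rw [Fintype.card_fin, hmsum S hS]
      split <;> omega
    obtain ⟨σ₀, hσ₀⟩ := (Equiv.Perm.exists_with_cycleType_iff (Fin n)
        (m := m S)).mpr ⟨hsumle, hm2 S hS⟩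
    have h2 : Fintype.card (Fin n) - σ₀.cycleType.sum ≤ 1 := by
      rw [Fintype.card_fin, hσ₀, hmsum S hS]
      by_cases h1 : 1 ∈ S
      · rw [if_pos h1]; have := hn_of_mem S hS h1; omega
      · rw [if_neg h1]; omega
    have := QAux3.card_fiber_mul σ₀ (hσ₀ ▸ hmnodup S) h2
    rw [hσ₀] at this
    rw [← hprodS S]
    rw [Fintype.card_fin] at this
    exact this
  -- the numerator as a sum
  set P : Perm (Fin n) × Perm (Fin n) → Prop := fun p =>
      p.1.cycleType = p.2.cycleType ∧ p.1.cycleType.Nodup ∧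
      (∀ i ∈ p.1.cycleType, Odd i) ∧ n - p.1.cycleType.sum ≤ 1 with hP
  have hbiUnion : Finset.univ.filter P = F.biUnion (fun S => fib S ×ˢ fib S) := by
    ext p
    simp only [Finset.mem_filter, Finset.mem_univ, true_and, Finset.mem_biUnion,
      Finset.mem_product, hfib, hP]
    constructor
    · rintro ⟨heq, hnodup, hodd, hle⟩
      set mm := p.1.cycleType with hmm
      have hmm2 : ∀ i ∈ mm, 2 ≤ i := fun i hi => Perm.two_le_of_mem_cycleType hi
      have hsumle : mm.sum ≤ n := by
        rw [hmm, Perm.sum_cycleType]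
        simpa using Finset.card_le_univ p.1.support
      have h1T : (1 : ℕ) ∉ mm.toFinset := by
        rw [Multiset.mem_toFinset]
        intro h
        have := hmm2 1 h; omega
      have hvalT : mm.toFinset.val = mm := by
        rw [Multiset.toFinset_val, Multiset.dedup_eq_self.mpr hnodup]
      have hmemmm : ∀ s ∈ mm, s ∈ Finset.Icc 1 n := by
        intro s hs
        rw [Finset.mem_Icc]
        refine ⟨by have := hmm2 s hs; omega, ?_⟩
        exact le_trans (Multiset.single_le_sum (fun x _ => Nat.zero_le x) s hs) hsumle
      have hTsum : mm.toFinset.sum id = mm.sum := by rw [← hsum_val, hvalT]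
      by_cases hcase : mm.sum = n
      · have hmS : m mm.toFinset = mm := by
          simp only [hm]
          rw [Finset.erase_eq_of_notMem h1T, hvalT]
        refine ⟨mm.toFinset, ?_, ?_, ?_⟩
        · simp only [hF, Finset.mem_filter, Finset.mem_powerset]
          refine ⟨fun s hs => hmemmm s (Multiset.mem_toFinset.mp hs),
            fun s hs => hodd s (Multiset.mem_toFinset.mp hs), ?_⟩
          rw [hTsum, hcase]
        · rw [hmS]
        · rw [hmS]; exact heq.symm
      · have hn1 : mm.sum + 1 = n := by omega
        have hmS : m (insert 1 mm.toFinset) = mm := by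
          simp only [hm]
          rw [Finset.erase_insert h1T, hvalT]
        refine ⟨insert 1 mm.toFinset, ?_, ?_, ?_⟩
        · simp only [hF, Finset.mem_filter, Finset.mem_powerset]
          refine ⟨?_, ?_, ?_⟩
          · intro s hs
            rcases Finset.mem_insert.mp hs with h | h
            · subst h; rw [Finset.mem_Icc]; omega
            · exact hmemmm s (Multiset.mem_toFinset.mp h)
          · intro s hs
            rcases Finset.mem_insert.mp hs with h | h
            · subst h; exact odd_one
            · exact hodd s (Multiset.mem_toFinset.mp h)
          · rw [Finset.sum_insert h1T, hTsum]
            simp only [id_eq]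
            omega
        · rw [hmS]
        · rw [hmS]; exact heq.symm
    · rintro ⟨S, hS, hp1, hp2⟩
      refine ⟨hp1.trans hp2.symm, hp1 ▸ hmnodup S, fun i hi => hmodd S hS i (hp1 ▸ hi), ?_⟩
      rw [hp1, hmsum S hS]
      by_cases h1 : 1 ∈ S
      · rw [if_pos h1]; omega
      · rw [if_neg h1]; omega
  have hdisj : ∀ S ∈ F, ∀ S' ∈ F, S ≠ S' →
      Disjoint (fib S ×ˢ fib S) (fib S' ×ˢ fib S') := by
    intro S hS S' hS' hne
    rw [Finset.disjoint_left]
    intro p hp hp'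
    rw [Finset.mem_product] at hp hp'
    simp only [hfib, Finset.mem_filter, Finset.mem_univ, true_and] at hp hp'
    have hmm' : m S = m S' := hp.1.symm.trans hp'.1
    have hES : S.erase 1 = S'.erase 1 := Finset.val_injective hmm'
    have hsums := congrArg Multiset.sum hmm'
    rw [hmsum S hS, hmsum S' hS'] at hsums
    apply hne
    by_cases h1 : 1 ∈ S <;> by_cases h1' : 1 ∈ S'
    · rw [← Finset.insert_erase h1, ← Finset.insert_erase h1', hES]
    · exfalso
      rw [if_pos h1, if_neg h1'] at hsums
      have := hn_of_mem S hS h1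
      omega
    · exfalso
      rw [if_neg h1, if_pos h1'] at hsums
      have := hn_of_mem S' hS' h1'
      omega
    · rw [← Finset.erase_eq_of_notMem h1, ← Finset.erase_eq_of_notMem h1', hES]
  have hcardN : Nat.card {p : Perm (Fin n) × Perm (Fin n) // P p}
      = ∑ S ∈ F, (fib S).card ^ 2 := by
    rw [Nat.card_eq_fintype_card]
    have h0 : Fintype.card {p : Perm (Fin n) × Perm (Fin n) // P p}
        = (Finset.univ.filter P).card := by
      convert Fintype.card_subtype P
    rw [h0, hbiUnion, Finset.card_biUnion hdisj]
    refine Finset.sum_congr rfl fun S _ => ?_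
    rw [Finset.card_product, sq]
  rw [show Q n = (Nat.card {p : Perm (Fin n) × Perm (Fin n) // P p} : ℝ)
      / (Nat.factorial n : ℝ) ^ 2 from rfl]
  rw [hcardN]
  push_cast
  rw [Finset.sum_div]
  refine Finset.sum_congr rfl fun S hS => ?_
  have h1 : ((fib S).card : ℝ) * (∏ s ∈ S, (s : ℝ)) = (Nat.factorial n : ℝ) := by
    have h1' := congrArg (fun k : ℕ => (k : ℝ)) (hfibcard S hS)
    push_cast at h1'
    exact h1'
  have hppos : (0 : ℝ) < ∏ s ∈ S, (s : ℝ) := by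
    apply Finset.prod_pos
    intro s hs
    have : 1 ≤ s := (Finset.mem_Icc.mp ((hmemF S hS).1 hs)).1
    exact_mod_cast Nat.lt_of_lt_of_le Nat.zero_lt_one this
  have hfpos : (0 : ℝ) < (Nat.factorial n : ℝ) := by
    exact_mod_cast n.factorial_pos
  have hrhs : ∏ s ∈ S, 1 / (s : ℝ) ^ 2 = 1 / (∏ s ∈ S, (s : ℝ)) ^ 2 := by
    rw [Finset.prod_div_distrib, Finset.prod_const_one, Finset.prod_pow]
  rw [hrhs, div_eq_div_iff (by positivity) (by positivity), one_mul, ← mul_pow, h1]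
end
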